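/- arXiv:1201.2186 — 2 statements merged into one kernel-verified Lean document; each statement's English description precedes it below -/
import Mathlib

section
/- Freeness of splayed divisors: let $\mathcal{O} = \mathbb{C}[[x_1,\dots,x_n,y_1,\dots,y_m]]$, let $g \in \mathbb{C}[[x_1,\dots,x_n]]$ and $h \in \mathbb{C}[[y_1,\dots,y_m]]$ be reduced. Then $\mathrm{Der}(\log gh)$ is a free $\mathcal{O}$-module if and only if $\mathrm{Der}_{\mathbb{C}[[x]]}(\log g)$ is a free $\mathbb{C}[[x_1,\dots,x_n]]$-module and $\mathrm{Der}_{\mathbb{C}[[y]]}(\log h)$ is a free $\mathbb{C}[[y_1,\dots,y_m]]$-module. -/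
set_option maxHeartbeats 1000000
set_option synthInstance.maxHeartbeats 400000
set_option linter.unusedSectionVars false

open MvPowerSeries Finset

section Core

variable {σ : Type*} [DecidableEq σ]

/-- Formal partial derivative of a multivariate power series with respect to the
variable `i`. -/
noncomputable def pderiv (i : σ) (f : MvPowerSeries σ ℂ) : MvPowerSeries σ ℂ :=
  fun m => ((m i : ℂ) + 1) * MvPowerSeries.coeff (m + Finsupp.single i 1) f

theorem coeff_pderiv (i : σ) (f : MvPowerSeries σ ℂ) (m : σ →₀ ℕ) :
    MvPowerSeries.coeff m (pderiv i f) =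
      ((m i : ℂ) + 1) * MvPowerSeries.coeff (m + Finsupp.single i 1) f := rfl

private lemma pderiv_key (i : σ) (f g : MvPowerSeries σ ℂ) (m : σ →₀ ℕ) :
    (∑ p ∈ (antidiagonal (m + Finsupp.single i 1) : Finset ((σ →₀ ℕ) × (σ →₀ ℕ))),
        (p.2 i : ℂ) * (MvPowerSeries.coeff p.1 f * MvPowerSeries.coeff p.2 g))
      = ∑ q ∈ (antidiagonal m : Finset ((σ →₀ ℕ) × (σ →₀ ℕ))),
          MvPowerSeries.coeff q.1 f * MvPowerSeries.coeff q.2 (pderiv i g) := by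
  classical
  rw [← Finset.sum_filter_of_ne (p := fun p : (σ →₀ ℕ) × (σ →₀ ℕ) => p.2 i ≠ 0)
    (by
      intro p _ hp hzero
      apply hp
      rw [hzero]
      simp)]
  refine Finset.sum_nbij' (fun p => (p.1, p.2 - Finsupp.single i 1))
    (fun q => (q.1, q.2 + Finsupp.single i 1)) ?_ ?_ ?_ ?_ ?_
  · intro p hp
    simp only [Finset.mem_filter, HasAntidiagonal.mem_antidiagonal] at hp
    obtain ⟨hsum, hne⟩ := hp
    rw [HasAntidiagonal.mem_antidiagonal]
    ext j
    have hj := DFunLike.congr_fun hsum j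
    simp only [Finsupp.add_apply, Finsupp.tsub_apply, Finsupp.single_apply] at hj ⊢
    by_cases hji : i = j
    · subst hji
      simp at hj ⊢
      omega
    · simp only [if_neg hji] at hj ⊢
      omega
  · intro q hq
    rw [HasAntidiagonal.mem_antidiagonal] at hq
    simp only [Finset.mem_filter, HasAntidiagonal.mem_antidiagonal]
    constructor
    · rw [← hq]; abel
    · simp [Finsupp.add_apply, Finsupp.single_apply]
  · intro p hp
    simp only [Finset.mem_filter, HasAntidiagonal.mem_antidiagonal] at hp
    obtain ⟨hsum, hne⟩ := hp
    have hle : Finsupp.single i 1 ≤ p.2 := by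
      rw [Finsupp.single_le_iff]; omega
    simp [tsub_add_cancel_of_le hle]
  · intro q _
    simp
  · intro p hp
    simp only [Finset.mem_filter, HasAntidiagonal.mem_antidiagonal] at hp
    obtain ⟨hsum, hne⟩ := hp
    have hle : Finsupp.single i 1 ≤ p.2 := by
      rw [Finsupp.single_le_iff]; omega
    rw [_root_.coeff_pderiv, tsub_add_cancel_of_le hle]
    have h2 : (((p.2 - Finsupp.single i 1 : σ →₀ ℕ) i : ℕ) : ℂ) + 1 = (p.2 i : ℂ) := by
      have hx : (p.2 - Finsupp.single i 1 : σ →₀ ℕ) i = p.2 i - 1 := by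
        simp [Finsupp.tsub_apply]
      rw [hx]
      have h1 : 1 ≤ p.2 i := by omega
      push_cast [h1]
      ring
    rw [h2]
    ring

theorem pderiv_mul (i : σ) (f g : MvPowerSeries σ ℂ) :
    pderiv i (f * g) = f * pderiv i g + g * pderiv i f := by
  classical
  apply MvPowerSeries.ext
  intro m
  have e1 : MvPowerSeries.coeff m (pderiv i (f * g))
      = ∑ p ∈ (antidiagonal (m + Finsupp.single i 1) : Finset ((σ →₀ ℕ) × (σ →₀ ℕ))),
          ((p.1 i : ℂ) * (MvPowerSeries.coeff p.1 f * MvPowerSeries.coeff p.2 g)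
            + (p.2 i : ℂ) * (MvPowerSeries.coeff p.1 f * MvPowerSeries.coeff p.2 g)) := by
    rw [_root_.coeff_pderiv, coeff_mul, Finset.mul_sum]
    refine Finset.sum_congr rfl ?_
    intro p hp
    rw [HasAntidiagonal.mem_antidiagonal] at hp
    have hj := DFunLike.congr_fun hp i
    simp only [Finsupp.add_apply, Finsupp.single_apply, if_pos rfl] at hj
    have hc : (p.1 i : ℂ) + (p.2 i : ℂ) = (m i : ℂ) + 1 := by
      exact_mod_cast congrArg (Nat.cast : ℕ → ℂ) hj
    rw [← hc, add_mul]
  have e3 : (∑ p ∈ (antidiagonal (m + Finsupp.single i 1) : Finset ((σ →₀ ℕ) × (σ →₀ ℕ))),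
      (p.2 i : ℂ) * (MvPowerSeries.coeff p.1 f * MvPowerSeries.coeff p.2 g))
      = MvPowerSeries.coeff m (f * pderiv i g) := by
    rw [coeff_mul]
    exact pderiv_key i f g m
  have e4 : (∑ p ∈ (antidiagonal (m + Finsupp.single i 1) : Finset ((σ →₀ ℕ) × (σ →₀ ℕ))),
      (p.1 i : ℂ) * (MvPowerSeries.coeff p.1 f * MvPowerSeries.coeff p.2 g))
      = MvPowerSeries.coeff m (g * pderiv i f) := by
    rw [coeff_mul, ← pderiv_key i g f m]
    refine Finset.sum_nbij' Prod.swap Prod.swap ?_ ?_ ?_ ?_ ?_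
    · intro p hp
      rw [HasAntidiagonal.mem_antidiagonal] at hp ⊢
      rw [← hp]
      exact add_comm _ _
    · intro p hp
      rw [HasAntidiagonal.mem_antidiagonal] at hp ⊢
      rw [← hp]
      exact add_comm _ _
    · intro p _
      simp
    · intro p _
      simp
    · intro p _
      simp only [Prod.fst_swap, Prod.snd_swap]
      ring
  rw [map_add, e1, Finset.sum_add_distrib, e3, e4]
  ring

theorem pderiv_add (i : σ) (f g : MvPowerSeries σ ℂ) :
    pderiv i (f + g) = pderiv i f + pderiv i g := by
  apply MvPowerSeries.ext
  intro m
  show ((m i : ℂ) + 1) * MvPowerSeries.coeff (m + Finsupp.single i 1) (f + g) = _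
  rw [map_add, map_add]
  show _ = ((m i : ℂ) + 1) * _ + ((m i : ℂ) + 1) * _
  ring

theorem pderiv_smul (i : σ) (c : ℂ) (f : MvPowerSeries σ ℂ) :
    pderiv i (c • f) = c • pderiv i f := by
  apply MvPowerSeries.ext
  intro m
  show ((m i : ℂ) + 1) * MvPowerSeries.coeff (m + Finsupp.single i 1) (c • f) = _
  rw [map_smul]
  show _ = c • (((m i : ℂ) + 1) * MvPowerSeries.coeff (m + Finsupp.single i 1) f)
  simp [smul_eq_mul]
  ring

/-- The formal partial derivative as a `ℂ`-linear derivation. -/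
noncomputable def pderivD (i : σ) : Derivation ℂ (MvPowerSeries σ ℂ) (MvPowerSeries σ ℂ) where
  toFun := pderiv i
  map_add' := pderiv_add i
  map_smul' c f := by simpa using pderiv_smul i c f
  map_one_eq_zero' := by
    apply MvPowerSeries.ext
    intro m
    classical
    show ((m i : ℂ) + 1) * MvPowerSeries.coeff (m + Finsupp.single i 1) 1 = _
    rw [MvPowerSeries.coeff_one]
    have : m + Finsupp.single i 1 ≠ 0 := by
      intro h
      have := DFunLike.congr_fun h i
      simp [Finsupp.add_apply, Finsupp.single_apply] at this
    rw [if_neg this]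
    simp
  leibniz' f g := by
    simpa [smul_eq_mul] using pderiv_mul i f g

/-- The module of logarithmic derivations along the divisor defined by `f`. -/
noncomputable def logDer (f : MvPowerSeries σ ℂ) :
    Submodule (MvPowerSeries σ ℂ) (Derivation ℂ (MvPowerSeries σ ℂ) (MvPowerSeries σ ℂ)) where
  carrier := {δ | δ f ∈ Ideal.span {f}}
  add_mem' := by
    intro a b ha hb
    simpa using Ideal.add_mem _ ha hb
  zero_mem' := by simp
  smul_mem' := by
    intro c δ hδ
    simpa [smul_eq_mul] using Ideal.mul_mem_left _ c hδ

/-- The Jacobian ideal of `f`: the ideal generated by all partial derivatives of `f`. -/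
noncomputable def jacobianIdeal (f : MvPowerSeries σ ℂ) : Ideal (MvPowerSeries σ ℂ) :=
  Ideal.span (Set.range fun i => pderiv i f)

/-- `f` depends only on the variables in `s`. -/
def DependsOnlyOn (s : Set σ) (f : MvPowerSeries σ ℂ) : Prop :=
  ∀ m : σ →₀ ℕ, (∃ i ∉ s, m i ≠ 0) → MvPowerSeries.coeff m f = 0

/-- `g` and `h` have no common irreducible factor. -/
def NoCommonFactor (g h : MvPowerSeries σ ℂ) : Prop :=
  ∀ p : MvPowerSeries σ ℂ, Irreducible p → p ∣ g → ¬ p ∣ h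

end Core

section General

open MvPowerSeries Finset

variable {σ : Type*} [DecidableEq σ]

/-- total degree of a monomial -/
def mdeg (ν : σ →₀ ℕ) : ℕ := ν.sum fun _ k => k

lemma mdeg_add (a b : σ →₀ ℕ) : mdeg (a + b) = mdeg a + mdeg b :=
  Finsupp.sum_add_index' (fun _ => rfl) (fun _ _ _ => rfl)

lemma apply_le_mdeg (a : σ →₀ ℕ) (i : σ) : a i ≤ mdeg a := by
  by_cases h : a i = 0
  · exact le_of_eq_of_le h (Nat.zero_le _)
  · exact Finset.single_le_sum (fun j _ => Nat.zero_le (a j)) (Finsupp.mem_support_iff.2 h)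

lemma mdeg_single (i : σ) : mdeg (Finsupp.single i 1) = 1 := by
  simp [mdeg, Finsupp.sum_single_index]

lemma eq_zero_of_mdeg_eq_zero {a : σ →₀ ℕ} (h : mdeg a = 0) : a = 0 := by
  ext i
  have := apply_le_mdeg a i
  simp only [Finsupp.coe_zero, Pi.zero_apply]
  omega

/-- `f` has order at least `k`. -/
def OrdGE (k : ℕ) (f : MvPowerSeries σ ℂ) : Prop :=
  ∀ ν, mdeg ν < k → MvPowerSeries.coeff ν f = 0

lemma ordGE_zero (f : MvPowerSeries σ ℂ) : OrdGE 0 f := fun ν h => absurd h (Nat.not_lt_zero _)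

lemma ordGE_mono {k l : ℕ} (h : l ≤ k) {f : MvPowerSeries σ ℂ} (hf : OrdGE k f) : OrdGE l f :=
  fun ν hν => hf ν (lt_of_lt_of_le hν h)

lemma ordGE_add {k : ℕ} {f g : MvPowerSeries σ ℂ} (hf : OrdGE k f) (hg : OrdGE k g) :
    OrdGE k (f + g) := fun ν hν => by
  rw [map_add, hf ν hν, hg ν hν, add_zero]

lemma ordGE_sum {ι : Type*} {k : ℕ} {s : Finset ι} {F : ι → MvPowerSeries σ ℂ}
    (h : ∀ i ∈ s, OrdGE k (F i)) : OrdGE k (∑ i ∈ s, F i) := fun ν hν => by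
  rw [map_sum]
  exact Finset.sum_eq_zero fun i hi => h i hi ν hν

lemma ordGE_mul {a b : ℕ} {f g : MvPowerSeries σ ℂ} (hf : OrdGE a f) (hg : OrdGE b g) :
    OrdGE (a + b) (f * g) := by
  intro ν hν
  rw [MvPowerSeries.coeff_mul]
  apply Finset.sum_eq_zero
  intro p hp
  rw [HasAntidiagonal.mem_antidiagonal] at hp
  have hd : mdeg p.1 + mdeg p.2 < a + b := by rw [← mdeg_add, hp]; exact hν
  rcases lt_or_ge (mdeg p.1) a with h1 | h1
  · rw [hf p.1 h1, zero_mul]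
  · rw [hg p.2 (by omega), mul_zero]

lemma ordGE_pderiv {k : ℕ} {f : MvPowerSeries σ ℂ} (i : σ) (hf : OrdGE k f) :
    OrdGE (k - 1) (pderiv i f) := by
  intro ν hν
  rw [_root_.coeff_pderiv, hf (ν + Finsupp.single i 1) (by rw [mdeg_add, mdeg_single]; omega), mul_zero]

lemma ordGE_X (i : σ) : OrdGE 1 (MvPowerSeries.X i : MvPowerSeries σ ℂ) := by
  intro ν hν
  have h0 : ν = 0 := eq_zero_of_mdeg_eq_zero (by omega)
  subst h0
  exact MvPowerSeries.coeff_zero_X i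

/-- canonical choice of an element of the support -/
noncomputable def pickVar (ν : σ →₀ ℕ) : Option σ := ν.support.val.toList.head?

lemma pickVar_spec {ν : σ →₀ ℕ} (h : ν ≠ 0) : ∃ i, pickVar ν = some i ∧ ν i ≠ 0 := by
  have hne : ν.support.val.toList ≠ [] := by
    rw [ne_eq, Multiset.toList_eq_nil, ← ne_eq, Finset.val_eq_zero.ne]
    exact (Finsupp.support_nonempty_iff.2 h).ne_empty
  rcases hl : ν.support.val.toList with _ | ⟨a, t⟩
  · exact absurd hl hne
  · refine ⟨a, ?_, ?_⟩
    · simp [pickVar, hl]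
    · have : a ∈ ν.support.val.toList := by rw [hl]; exact List.mem_cons_self
      rw [Multiset.mem_toList] at this
      exact Finsupp.mem_support_iff.1 this

/-- canonical splitting part of `f` along the variable `i`, with respect to a
choice function `pk`. -/
noncomputable def splitPart (pk : (σ →₀ ℕ) → Option σ) (i : σ) (f : MvPowerSeries σ ℂ) :
    MvPowerSeries σ ℂ :=
  fun ν => if pk (ν + Finsupp.single i 1) = some i then
    MvPowerSeries.coeff (ν + Finsupp.single i 1) f else 0

lemma coeff_splitPart (pk : (σ →₀ ℕ) → Option σ) (i : σ) (f : MvPowerSeries σ ℂ) (ν : σ →₀ ℕ) :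
    MvPowerSeries.coeff ν (splitPart pk i f) =
      if pk (ν + Finsupp.single i 1) = some i then
        MvPowerSeries.coeff (ν + Finsupp.single i 1) f else 0 := rfl

lemma splitPart_sum (S : Finset σ) (pk : (σ →₀ ℕ) → Option σ) (f : MvPowerSeries σ ℂ)
    (hpk : ∀ ν, MvPowerSeries.coeff ν f ≠ 0 → ∃ i ∈ S, pk ν = some i ∧ ν i ≠ 0) :
    f = ∑ i ∈ S, (MvPowerSeries.X i : MvPowerSeries σ ℂ) * splitPart pk i f := by
  apply MvPowerSeries.ext
  intro ν
  rw [map_sum]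
  have hterm : ∀ i, MvPowerSeries.coeff ν (MvPowerSeries.X i * splitPart pk i f) =
      if Finsupp.single i 1 ≤ ν then
        (if pk ν = some i then MvPowerSeries.coeff ν f else 0) else 0 := by
    intro i
    rw [MvPowerSeries.X_def, MvPowerSeries.coeff_monomial_mul]
    by_cases h1 : Finsupp.single i 1 ≤ ν
    · rw [if_pos h1, if_pos h1, one_mul, coeff_splitPart, tsub_add_cancel_of_le h1]
    · rw [if_neg h1, if_neg h1]
  by_cases hf : MvPowerSeries.coeff ν f = 0
  · rw [hf]
    symm
    apply Finset.sum_eq_zero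
    intro i _
    rw [hterm i, hf]
    simp
  · obtain ⟨i₀, hi₀S, hpk₀, hν₀⟩ := hpk ν hf
    rw [Finset.sum_eq_single_of_mem i₀ hi₀S]
    · rw [hterm i₀, if_pos (Finsupp.single_le_iff.2 (by omega)), if_pos hpk₀]
    · intro j _ hj
      rw [hterm j]
      have : ¬ pk ν = some j := by rw [hpk₀]; simp [hj.symm]
      simp [this]

variable [Fintype σ]

lemma derivation_apply_sum {ι : Type*} (s : Finset ι)
    (Ds : ι → Derivation ℂ (MvPowerSeries σ ℂ) (MvPowerSeries σ ℂ)) (f : MvPowerSeries σ ℂ) :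
    (∑ i ∈ s, Ds i) f = ∑ i ∈ s, Ds i f := by
  induction s using Finset.cons_induction with
  | empty => simp
  | cons a s ha ih => rw [Finset.sum_cons, Finset.sum_cons, Derivation.add_apply, ih]

theorem derivation_ordGE (D : Derivation ℂ (MvPowerSeries σ ℂ) (MvPowerSeries σ ℂ)) :
    ∀ (k : ℕ) (f : MvPowerSeries σ ℂ), OrdGE k f → OrdGE (k - 1) (D f) := by
  intro k
  induction k with
  | zero => intro f _; exact ordGE_zero _
  | succ k IH =>
    intro f hf
    have hpk : ∀ ν, MvPowerSeries.coeff ν f ≠ 0 →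
        ∃ i ∈ Finset.univ, pickVar ν = some i ∧ ν i ≠ 0 := by
      intro ν hν
      have hν0 : ν ≠ 0 := by
        rintro rfl
        exact hν (hf 0 (by simp [mdeg]))
      obtain ⟨i, h1, h2⟩ := pickVar_spec hν0
      exact ⟨i, Finset.mem_univ i, h1, h2⟩
    have hsplit := splitPart_sum Finset.univ pickVar f hpk
    have hg : ∀ i : σ, OrdGE k (splitPart pickVar i f) := by
      intro i ν hν
      rw [coeff_splitPart]
      split_ifs with h
      · exact hf _ (by rw [mdeg_add, mdeg_single]; omega)
      · rfl
    have hDf : D f = ∑ i : σ, D (MvPowerSeries.X i * splitPart pickVar i f) := by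
      conv_lhs => rw [hsplit]
      exact map_sum D _ _
    have : OrdGE k (D f) := by
      rw [hDf]
      apply ordGE_sum
      intro i _
      rw [Derivation.leibniz, smul_eq_mul, smul_eq_mul]
      apply ordGE_add
      · exact ordGE_mono (by omega) (ordGE_mul (ordGE_X i) (IH _ (hg i)))
      · exact ordGE_mono (by omega) (ordGE_mul (hg i) (ordGE_zero (D (MvPowerSeries.X i))))
    simpa using this

lemma pderiv_C (i : σ) (a : ℂ) : pderiv i ((MvPowerSeries.C (σ := σ) (R := ℂ)) a) = 0 := by
  apply MvPowerSeries.ext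
  intro ν
  rw [_root_.coeff_pderiv, MvPowerSeries.coeff_C]
  have h : ν + Finsupp.single i 1 ≠ 0 := by
    intro h
    have := DFunLike.congr_fun h i
    simp [Finsupp.add_apply, Finsupp.single_apply] at this
  rw [if_neg h, mul_zero, map_zero]

lemma pderiv_X (i j : σ) :
    pderiv i (MvPowerSeries.X j : MvPowerSeries σ ℂ) = if i = j then 1 else 0 := by
  apply MvPowerSeries.ext
  intro ν
  rw [_root_.coeff_pderiv, MvPowerSeries.coeff_X]
  by_cases hij : i = j
  · subst hij
    rw [if_pos rfl, MvPowerSeries.coeff_one]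
    by_cases hν : ν = 0
    · subst hν; simp
    · rw [if_neg hν, if_neg (by simpa [add_eq_right] using hν), mul_zero]
  · have h : ν + Finsupp.single i 1 ≠ Finsupp.single j 1 := by
      intro h
      have := DFunLike.congr_fun h i
      simp [Finsupp.add_apply, Finsupp.single_apply, Ne.symm hij] at this
    rw [if_neg h, mul_zero, if_neg hij, map_zero]

variable [Fintype σ]

lemma derivation_coe_poly (D : Derivation ℂ (MvPowerSeries σ ℂ) (MvPowerSeries σ ℂ))
    (p : MvPolynomial σ ℂ) :
    D ↑p = ∑ i, D (MvPowerSeries.X i) * pderiv i ↑p := by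
  induction p using MvPolynomial.induction_on with
  | C a =>
    rw [MvPolynomial.coe_C]
    have h1 : D ((MvPowerSeries.C (σ := σ) (R := ℂ)) a) = 0 := by
      have h2 : ((MvPowerSeries.C (σ := σ) (R := ℂ)) a) = algebraMap ℂ (MvPowerSeries σ ℂ) a := rfl
      rw [h2, Derivation.map_algebraMap]
    rw [h1]
    symm
    apply Finset.sum_eq_zero
    intro i _
    rw [_root_.pderiv_C, mul_zero]
  | add p q ihp ihq =>
    rw [MvPolynomial.coe_add, map_add, ihp, ihq, ← Finset.sum_add_distrib]
    refine Finset.sum_congr rfl fun i _ => ?_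
    rw [pderiv_add, mul_add]
  | mul_X p j ih =>
    rw [MvPolynomial.coe_mul, MvPolynomial.coe_X, Derivation.leibniz, smul_eq_mul, smul_eq_mul]
    have hterm : ∀ i : σ,
        D (MvPowerSeries.X i) * pderiv i ((p : MvPowerSeries σ ℂ) * MvPowerSeries.X j)
        = (if i = j then D (MvPowerSeries.X j) * (p : MvPowerSeries σ ℂ) else 0)
          + MvPowerSeries.X j * (D (MvPowerSeries.X i) * pderiv i (p : MvPowerSeries σ ℂ)) := by
      intro i
      rw [pderiv_mul, _root_.pderiv_X]
      by_cases hij : i = j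
      · subst hij; rw [if_pos rfl, if_pos rfl]; ring
      · rw [if_neg hij, if_neg hij]; ring
    rw [Finset.sum_congr rfl fun i _ => hterm i, Finset.sum_add_distrib,
      Finset.sum_ite_eq' Finset.univ j (fun i => D (MvPowerSeries.X j) * (p : MvPowerSeries σ ℂ)),
      if_pos (Finset.mem_univ j), ← Finset.mul_sum, ← ih]
    ring

theorem derivation_eq_sum (D : Derivation ℂ (MvPowerSeries σ ℂ) (MvPowerSeries σ ℂ))
    (f : MvPowerSeries σ ℂ) :
    D f = ∑ i, D (MvPowerSeries.X i) * pderiv i f := by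
  apply MvPowerSeries.ext
  intro ν
  set k : ℕ := mdeg ν + 2 with hk
  set bnd : σ →₀ ℕ := Finsupp.equivFunOnFinite.symm (fun _ => k) with hbnd
  set P : MvPolynomial σ ℂ :=
    ∑ μ ∈ (Finset.Iic bnd).filter (fun μ => mdeg μ < k),
      MvPolynomial.monomial μ (MvPowerSeries.coeff μ f) with hP
  have hPcoeff : ∀ μ, MvPolynomial.coeff μ P =
      if mdeg μ < k then MvPowerSeries.coeff μ f else 0 := by
    intro μ
    rw [hP, MvPolynomial.coeff_sum]
    simp only [MvPolynomial.coeff_monomial]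
    rw [Finset.sum_ite_eq' ((Finset.Iic bnd).filter (fun μ => mdeg μ < k)) μ
      (fun μ => MvPowerSeries.coeff μ f)]
    by_cases hμ : mdeg μ < k
    · rw [if_pos hμ, if_pos]
      rw [Finset.mem_filter, Finset.mem_Iic]
      refine ⟨?_, hμ⟩
      rw [Finsupp.le_def]
      intro i
      have h1 := apply_le_mdeg μ i
      have h2 : bnd i = k := by simp [hbnd]
      omega
    · rw [if_neg hμ, if_neg]
      rw [Finset.mem_filter]
      exact fun h => hμ h.2
  have hr : OrdGE k (f - (P : MvPowerSeries σ ℂ)) := by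
    intro μ hμ
    rw [map_sub, MvPolynomial.coeff_coe, hPcoeff, if_pos hμ, sub_self]
  have h1 : MvPowerSeries.coeff ν (D (f - (P : MvPowerSeries σ ℂ))) = 0 :=
    derivation_ordGE D k _ hr ν (by omega)
  have h2 : ∀ i : σ, MvPowerSeries.coeff ν (D (MvPowerSeries.X i) * pderiv i (f - (P : MvPowerSeries σ ℂ))) = 0 := by
    intro i
    have h3 := ordGE_mul (ordGE_zero (D (MvPowerSeries.X i))) (ordGE_pderiv i hr)
    exact h3 ν (by omega)
  have hsplit : f = (P : MvPowerSeries σ ℂ) + (f - (P : MvPowerSeries σ ℂ)) := by ring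
  calc MvPowerSeries.coeff ν (D f)
      = MvPowerSeries.coeff ν (D (P : MvPowerSeries σ ℂ)) + MvPowerSeries.coeff ν (D (f - (P : MvPowerSeries σ ℂ))) := by
        conv_lhs => rw [hsplit]
        rw [map_add, map_add]
    _ = MvPowerSeries.coeff ν (∑ i, D (MvPowerSeries.X i) * pderiv i f) := by
        rw [h1, add_zero, derivation_coe_poly D P]
        rw [map_sum, map_sum]
        apply Finset.sum_congr rfl
        intro i _
        have hps : pderiv i (f - (P : MvPowerSeries σ ℂ)) = pderiv i f - pderiv i (↑P : MvPowerSeries σ ℂ) :=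
          map_sub ((pderivD i : Derivation ℂ (MvPowerSeries σ ℂ) (MvPowerSeries σ ℂ)).toLinearMap)
            f ↑P
        have h4 : D (MvPowerSeries.X i) * pderiv i (↑P : MvPowerSeries σ ℂ)
            = D (MvPowerSeries.X i) * pderiv i f
              - D (MvPowerSeries.X i) * pderiv i (f - (P : MvPowerSeries σ ℂ)) := by
          rw [hps]; ring
        rw [h4, map_sub, h2 i, sub_zero]

/-- Evaluation of derivations on the variables, as a linear equivalence. -/
noncomputable def derEquiv :
    Derivation ℂ (MvPowerSeries σ ℂ) (MvPowerSeries σ ℂ)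
      ≃ₗ[MvPowerSeries σ ℂ] (σ → MvPowerSeries σ ℂ) where
  toFun D := fun i => D (MvPowerSeries.X i)
  map_add' D₁ D₂ := by funext i; simp
  map_smul' c D := by funext i; simp
  invFun a := ∑ i, a i • pderivD i
  left_inv D := by
    apply Derivation.ext
    intro f
    rw [derivation_apply_sum, derivation_eq_sum D f]
    apply Finset.sum_congr rfl
    intro i _
    rfl
  right_inv a := by
    funext i
    show (∑ j, a j • pderivD j) (MvPowerSeries.X i) = a i
    rw [derivation_apply_sum]
    have h : ∀ j, (a j • pderivD j) (MvPowerSeries.X i)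
        = a j * pderiv j (MvPowerSeries.X i) := fun j => rfl
    rw [Finset.sum_congr rfl fun j _ => h j]
    simp [_root_.pderiv_X, Finset.sum_ite_eq', mul_ite]

/-- The module of solutions `a` to `∑ aᵢ ∂ᵢ f ∈ (f)`. -/
noncomputable def SolMod (f : MvPowerSeries σ ℂ) :
    Submodule (MvPowerSeries σ ℂ) (σ → MvPowerSeries σ ℂ) where
  carrier := {a | ∑ i, a i * pderiv i f ∈ Ideal.span {f}}
  add_mem' := by
    intro a b ha hb
    simp only [Set.mem_setOf_eq, Pi.add_apply, add_mul, Finset.sum_add_distrib]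
    exact Ideal.add_mem _ ha hb
  zero_mem' := by simp
  smul_mem' := by
    intro c a ha
    simp only [Set.mem_setOf_eq, Pi.smul_apply, smul_eq_mul, mul_assoc, ← Finset.mul_sum]
    exact Ideal.mul_mem_left _ _ ha

lemma mem_solMod_iff (f : MvPowerSeries σ ℂ) (a : σ → MvPowerSeries σ ℂ) :
    a ∈ SolMod f ↔ ∑ i, a i * pderiv i f ∈ Ideal.span {f} := Iff.rfl

theorem free_logDer_iff_free_solMod (f : MvPowerSeries σ ℂ) :
    Module.Free (MvPowerSeries σ ℂ) ↥(logDer f)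
      ↔ Module.Free (MvPowerSeries σ ℂ) ↥(SolMod f) := by
  have hmap : (logDer f).map ((derEquiv (σ := σ)) :
      Derivation ℂ (MvPowerSeries σ ℂ) (MvPowerSeries σ ℂ)
        →ₗ[MvPowerSeries σ ℂ] (σ → MvPowerSeries σ ℂ)) = SolMod f := by
    ext a
    rw [Submodule.mem_map_equiv]
    show (derEquiv.symm a) f ∈ Ideal.span {f} ↔ _
    have h : (derEquiv.symm a) f = ∑ i, a i * pderiv i f := by
      show (∑ i, a i • pderivD i) f = _
      rw [derivation_apply_sum]
      rfl
    rw [h, mem_solMod_iff]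
  have e1 : ↥(logDer f) ≃ₗ[MvPowerSeries σ ℂ] ↥(SolMod f) :=
    (derEquiv.submoduleMap (logDer f)).trans (LinearEquiv.ofEq _ _ hmap)
  exact ⟨fun h => by haveI := h; exact Module.Free.of_equiv e1,
    fun h => by haveI := h; exact Module.Free.of_equiv e1.symm⟩

end General



section AB

open MvPowerSeries Finset

variable {α β : Type*} [DecidableEq α] [DecidableEq β]

/-- The monomial splitting equivalence, as an additive equivalence. -/
noncomputable def EE (α β : Type*) : (α ⊕ β →₀ ℕ) ≃+ ((α →₀ ℕ) × (β →₀ ℕ)) :=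
  Finsupp.sumFinsuppAddEquivProdFinsupp

lemma EE_fst_apply (mo : α ⊕ β →₀ ℕ) (x : α) : (EE α β mo).1 x = mo (Sum.inl x) := rfl

lemma EE_snd_apply (mo : α ⊕ β →₀ ℕ) (y : β) : (EE α β mo).2 y = mo (Sum.inr y) := rfl

lemma EE_single_inl (i : α) :
    EE α β (Finsupp.single (Sum.inl i) 1) = (Finsupp.single i 1, 0) := by
  have h1 : (EE α β (Finsupp.single (Sum.inl i) 1)).1 = Finsupp.single i 1 := by
    ext x
    rw [EE_fst_apply]
    simp [Finsupp.single_apply, Sum.inl.injEq]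
  have h2 : (EE α β (Finsupp.single (Sum.inl i) 1)).2 = 0 := by
    ext y
    rw [EE_snd_apply]
    simp [Finsupp.single_apply]
  rw [← h1, ← h2]

lemma EE_single_inr (j : β) :
    EE α β (Finsupp.single (Sum.inr j) 1) = (0, Finsupp.single j 1) := by
  have h1 : (EE α β (Finsupp.single (Sum.inr j) 1)).1 = 0 := by
    ext x
    rw [EE_fst_apply]
    simp [Finsupp.single_apply]
  have h2 : (EE α β (Finsupp.single (Sum.inr j) 1)).2 = Finsupp.single j 1 := by
    ext y
    rw [EE_snd_apply]
    simp [Finsupp.single_apply, Sum.inr.injEq]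
  rw [← h1, ← h2]

/-- Slice of a power series in the `x`-direction: fix the `y`-exponent `ν`. -/
noncomputable def sliceL (ν : β →₀ ℕ) (P : MvPowerSeries (α ⊕ β) ℂ) : MvPowerSeries α ℂ :=
  fun μ => P ((EE α β).symm (μ, ν))

/-- Slice of a power series in the `y`-direction: fix the `x`-exponent `μ`. -/
noncomputable def sliceR (μ : α →₀ ℕ) (P : MvPowerSeries (α ⊕ β) ℂ) : MvPowerSeries β ℂ :=
  fun ν => P ((EE α β).symm (μ, ν))

/-- Embedding of `ℂ[[x]]` into `ℂ[[x,y]]`. -/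
noncomputable def eL (g : MvPowerSeries α ℂ) : MvPowerSeries (α ⊕ β) ℂ :=
  fun mo => if (EE α β mo).2 = 0 then MvPowerSeries.coeff (EE α β mo).1 g else 0

/-- Embedding of `ℂ[[y]]` into `ℂ[[x,y]]`. -/
noncomputable def eR (h : MvPowerSeries β ℂ) : MvPowerSeries (α ⊕ β) ℂ :=
  fun mo => if (EE α β mo).1 = 0 then MvPowerSeries.coeff (EE α β mo).2 h else 0

lemma coeff_sliceL (ν : β →₀ ℕ) (P : MvPowerSeries (α ⊕ β) ℂ) (μ : α →₀ ℕ) :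
    MvPowerSeries.coeff μ (sliceL ν P) = MvPowerSeries.coeff ((EE α β).symm (μ, ν)) P := rfl

lemma coeff_sliceR (μ : α →₀ ℕ) (P : MvPowerSeries (α ⊕ β) ℂ) (ν : β →₀ ℕ) :
    MvPowerSeries.coeff ν (sliceR μ P) = MvPowerSeries.coeff ((EE α β).symm (μ, ν)) P := rfl

lemma coeff_eL (g : MvPowerSeries α ℂ) (mo : α ⊕ β →₀ ℕ) :
    MvPowerSeries.coeff mo (eL g) =
      if (EE α β mo).2 = 0 then MvPowerSeries.coeff (EE α β mo).1 g else 0 := rfl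

lemma coeff_eR (h : MvPowerSeries β ℂ) (mo : α ⊕ β →₀ ℕ) :
    MvPowerSeries.coeff mo (eR h) =
      if (EE α β mo).1 = 0 then MvPowerSeries.coeff (EE α β mo).2 h else 0 := rfl

lemma sliceL_ext {P Q : MvPowerSeries (α ⊕ β) ℂ}
    (h : ∀ ν, sliceL (α := α) ν P = sliceL ν Q) : P = Q := by
  apply MvPowerSeries.ext
  intro mo
  have h2 := congrArg (MvPowerSeries.coeff (EE α β mo).1) (h (EE α β mo).2)
  rw [coeff_sliceL, coeff_sliceL] at h2
  simpa using h2

lemma sliceR_ext {P Q : MvPowerSeries (α ⊕ β) ℂ}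
    (h : ∀ μ, sliceR (β := β) μ P = sliceR μ Q) : P = Q := by
  apply MvPowerSeries.ext
  intro mo
  have h2 := congrArg (MvPowerSeries.coeff (EE α β mo).2) (h (EE α β mo).1)
  rw [coeff_sliceR, coeff_sliceR] at h2
  simpa using h2

lemma sliceL_add (ν : β →₀ ℕ) (P Q : MvPowerSeries (α ⊕ β) ℂ) :
    sliceL ν (P + Q) = sliceL ν P + sliceL ν Q := rfl

lemma sliceR_add (μ : α →₀ ℕ) (P Q : MvPowerSeries (α ⊕ β) ℂ) :
    sliceR μ (P + Q) = sliceR μ P + sliceR μ Q := rfl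

lemma sliceL_zero (ν : β →₀ ℕ) : sliceL (α := α) ν 0 = 0 := rfl

lemma sliceR_zero (μ : α →₀ ℕ) : sliceR (β := β) μ 0 = 0 := rfl

lemma sliceL_sum {ι : Type*} (s : Finset ι) (F : ι → MvPowerSeries (α ⊕ β) ℂ) (ν : β →₀ ℕ) :
    sliceL ν (∑ i ∈ s, F i) = ∑ i ∈ s, sliceL ν (F i) := by
  induction s using Finset.cons_induction with
  | empty => simp [sliceL_zero]
  | cons a s ha ih => rw [Finset.sum_cons, Finset.sum_cons, sliceL_add, ih]

lemma sliceR_sum {ι : Type*} (s : Finset ι) (F : ι → MvPowerSeries (α ⊕ β) ℂ) (μ : α →₀ ℕ) :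
    sliceR μ (∑ i ∈ s, F i) = ∑ i ∈ s, sliceR μ (F i) := by
  induction s using Finset.cons_induction with
  | empty => simp [sliceR_zero]
  | cons a s ha ih => rw [Finset.sum_cons, Finset.sum_cons, sliceR_add, ih]

lemma sliceL_mul (ν : β →₀ ℕ) (P Q : MvPowerSeries (α ⊕ β) ℂ) :
    sliceL ν (P * Q) = ∑ p ∈ antidiagonal ν, sliceL p.1 P * sliceL p.2 Q := by
  apply MvPowerSeries.ext
  intro μ
  rw [coeff_sliceL, MvPowerSeries.coeff_mul, map_sum]
  have hrhs : ∀ p ∈ antidiagonal ν,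
      MvPowerSeries.coeff μ (sliceL p.1 P * sliceL p.2 Q)
        = ∑ q ∈ antidiagonal μ, MvPowerSeries.coeff ((EE α β).symm (q.1, p.1)) P *
            MvPowerSeries.coeff ((EE α β).symm (q.2, p.2)) Q := by
    intro p _
    rw [MvPowerSeries.coeff_mul]
    exact Finset.sum_congr rfl fun q _ => rfl
  rw [Finset.sum_congr rfl hrhs, ← Finset.sum_product']
  refine Finset.sum_nbij' (fun u => (((EE α β u.1).2, (EE α β u.2).2),
      ((EE α β u.1).1, (EE α β u.2).1)))
    (fun x => ((EE α β).symm (x.2.1, x.1.1), (EE α β).symm (x.2.2, x.1.2))) ?_ ?_ ?_ ?_ ?_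
  · intro u hu
    rw [HasAntidiagonal.mem_antidiagonal] at hu
    have h1 : EE α β u.1 + EE α β u.2 = (μ, ν) := by
      rw [← map_add, hu]
      simp
    rw [Finset.mem_product, HasAntidiagonal.mem_antidiagonal, HasAntidiagonal.mem_antidiagonal]
    constructor
    · have := congrArg Prod.snd h1
      simpa using this
    · have := congrArg Prod.fst h1
      simpa using this
  · intro x hx
    rw [Finset.mem_product, HasAntidiagonal.mem_antidiagonal, HasAntidiagonal.mem_antidiagonal] at hx
    rw [HasAntidiagonal.mem_antidiagonal, ← map_add]
    have : (x.2.1 + x.2.2, x.1.1 + x.1.2) = (μ, ν) := by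
      rw [Prod.ext_iff]
      exact ⟨hx.2, hx.1⟩
    rw [Prod.mk_add_mk, this]
  · intro u _
    simp
  · intro x _
    simp
  · intro u _
    simp

lemma sliceR_mul (μ : α →₀ ℕ) (P Q : MvPowerSeries (α ⊕ β) ℂ) :
    sliceR μ (P * Q) = ∑ p ∈ antidiagonal μ, sliceR p.1 P * sliceR p.2 Q := by
  apply MvPowerSeries.ext
  intro ν
  rw [coeff_sliceR, MvPowerSeries.coeff_mul, map_sum]
  have hrhs : ∀ p ∈ antidiagonal μ,
      MvPowerSeries.coeff ν (sliceR p.1 P * sliceR p.2 Q)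
        = ∑ q ∈ antidiagonal ν, MvPowerSeries.coeff ((EE α β).symm (p.1, q.1)) P *
            MvPowerSeries.coeff ((EE α β).symm (p.2, q.2)) Q := by
    intro p _
    rw [MvPowerSeries.coeff_mul]
    exact Finset.sum_congr rfl fun q _ => rfl
  rw [Finset.sum_congr rfl hrhs, ← Finset.sum_product']
  refine Finset.sum_nbij' (fun u => (((EE α β u.1).1, (EE α β u.2).1),
      ((EE α β u.1).2, (EE α β u.2).2)))
    (fun x => ((EE α β).symm (x.1.1, x.2.1), (EE α β).symm (x.1.2, x.2.2))) ?_ ?_ ?_ ?_ ?_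
  · intro u hu
    rw [HasAntidiagonal.mem_antidiagonal] at hu
    have h1 : EE α β u.1 + EE α β u.2 = (μ, ν) := by
      rw [← map_add, hu]
      simp
    rw [Finset.mem_product, HasAntidiagonal.mem_antidiagonal, HasAntidiagonal.mem_antidiagonal]
    constructor
    · have := congrArg Prod.fst h1
      simpa using this
    · have := congrArg Prod.snd h1
      simpa using this
  · intro x hx
    rw [Finset.mem_product, HasAntidiagonal.mem_antidiagonal, HasAntidiagonal.mem_antidiagonal] at hx
    rw [HasAntidiagonal.mem_antidiagonal, ← map_add]
    have : (x.1.1 + x.1.2, x.2.1 + x.2.2) = (μ, ν) := by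
      rw [Prod.ext_iff]
      exact ⟨hx.1, hx.2⟩
    rw [Prod.mk_add_mk, this]
  · intro u _
    simp
  · intro x _
    simp
  · intro u _
    simp

lemma sliceL_eL (ν : β →₀ ℕ) (g : MvPowerSeries α ℂ) :
    sliceL ν (eL (β := β) g) = if ν = 0 then g else 0 := by
  apply MvPowerSeries.ext
  intro μ
  rw [coeff_sliceL, coeff_eL]
  simp only [AddEquiv.apply_symm_apply]
  rw [apply_ite (MvPowerSeries.coeff μ)]
  simp

lemma sliceL_eR (ν : β →₀ ℕ) (h : MvPowerSeries β ℂ) :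
    sliceL (α := α) ν (eR h) = (MvPowerSeries.C (σ := α) (R := ℂ)) (MvPowerSeries.coeff ν h) := by
  apply MvPowerSeries.ext
  intro μ
  rw [coeff_sliceL, coeff_eR]
  simp only [AddEquiv.apply_symm_apply]
  rw [MvPowerSeries.coeff_C]

lemma sliceR_eR (μ : α →₀ ℕ) (h : MvPowerSeries β ℂ) :
    sliceR μ (eR (α := α) h) = if μ = 0 then h else 0 := by
  apply MvPowerSeries.ext
  intro ν
  rw [coeff_sliceR, coeff_eR]
  simp only [AddEquiv.apply_symm_apply]
  rw [apply_ite (MvPowerSeries.coeff ν)]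
  simp

lemma sliceR_eL (μ : α →₀ ℕ) (g : MvPowerSeries α ℂ) :
    sliceR (β := β) μ (eL g) = (MvPowerSeries.C (σ := β) (R := ℂ)) (MvPowerSeries.coeff μ g) := by
  apply MvPowerSeries.ext
  intro ν
  rw [coeff_sliceR, coeff_eL]
  simp only [AddEquiv.apply_symm_apply]
  rw [MvPowerSeries.coeff_C]

lemma sliceL_mul_eL (ν : β →₀ ℕ) (P : MvPowerSeries (α ⊕ β) ℂ) (r : MvPowerSeries α ℂ) :
    sliceL ν (P * eL r) = sliceL ν P * r := by
  rw [sliceL_mul]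
  rw [Finset.sum_eq_single (ν, (0 : β →₀ ℕ))]
  · rw [sliceL_eL, if_pos rfl]
  · intro p hp hne
    rw [HasAntidiagonal.mem_antidiagonal] at hp
    have h2 : p.2 ≠ 0 := by
      intro h0
      apply hne
      have : p.1 = ν := by rw [← hp, h0, add_zero]
      rw [← this, ← h0]
    rw [sliceL_eL, if_neg h2, mul_zero]
  · intro hm
    exact absurd (HasAntidiagonal.mem_antidiagonal.2 (by simp)) hm

lemma sliceL_eL_mul (ν : β →₀ ℕ) (P : MvPowerSeries (α ⊕ β) ℂ) (r : MvPowerSeries α ℂ) :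
    sliceL ν (eL r * P) = r * sliceL ν P := by
  rw [sliceL_mul]
  rw [Finset.sum_eq_single ((0 : β →₀ ℕ), ν)]
  · rw [sliceL_eL, if_pos rfl]
  · intro p hp hne
    rw [HasAntidiagonal.mem_antidiagonal] at hp
    have h1 : p.1 ≠ 0 := by
      intro h0
      apply hne
      have : p.2 = ν := by rw [← hp, h0, zero_add]
      rw [← this, ← h0]
    rw [sliceL_eL, if_neg h1, zero_mul]
  · intro hm
    exact absurd (HasAntidiagonal.mem_antidiagonal.2 (by simp)) hm

lemma sliceR_mul_eR (μ : α →₀ ℕ) (P : MvPowerSeries (α ⊕ β) ℂ) (r : MvPowerSeries β ℂ) :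
    sliceR μ (P * eR r) = sliceR μ P * r := by
  rw [sliceR_mul]
  rw [Finset.sum_eq_single (μ, (0 : α →₀ ℕ))]
  · rw [sliceR_eR, if_pos rfl]
  · intro p hp hne
    rw [HasAntidiagonal.mem_antidiagonal] at hp
    have h2 : p.2 ≠ 0 := by
      intro h0
      apply hne
      have : p.1 = μ := by rw [← hp, h0, add_zero]
      rw [← this, ← h0]
    rw [sliceR_eR, if_neg h2, mul_zero]
  · intro hm
    exact absurd (HasAntidiagonal.mem_antidiagonal.2 (by simp)) hm

lemma sliceR_eR_mul (μ : α →₀ ℕ) (P : MvPowerSeries (α ⊕ β) ℂ) (r : MvPowerSeries β ℂ) :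
    sliceR μ (eR r * P) = r * sliceR μ P := by
  rw [sliceR_mul]
  rw [Finset.sum_eq_single ((0 : α →₀ ℕ), μ)]
  · rw [sliceR_eR, if_pos rfl]
  · intro p hp hne
    rw [HasAntidiagonal.mem_antidiagonal] at hp
    have h1 : p.1 ≠ 0 := by
      intro h0
      apply hne
      have : p.2 = μ := by rw [← hp, h0, zero_add]
      rw [← this, ← h0]
    rw [sliceR_eR, if_neg h1, zero_mul]
  · intro hm
    exact absurd (HasAntidiagonal.mem_antidiagonal.2 (by simp)) hm

lemma eL_injective : Function.Injective (eL (α := α) (β := β)) := by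
  intro g g' h
  have := congrArg (sliceL 0) h
  rw [sliceL_eL, sliceL_eL, if_pos rfl, if_pos rfl] at this
  exact this

lemma eR_injective : Function.Injective (eR (α := α) (β := β)) := by
  intro g g' h
  have := congrArg (sliceR 0) h
  rw [sliceR_eR, sliceR_eR, if_pos rfl, if_pos rfl] at this
  exact this

lemma eL_zero : eL (α := α) (β := β) 0 = 0 := by
  apply sliceL_ext
  intro ν
  rw [sliceL_eL, sliceL_zero]
  split_ifs <;> rfl

lemma eR_zero : eR (α := α) (β := β) 0 = 0 := by
  apply sliceR_ext
  intro μ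
  rw [sliceR_eR, sliceR_zero]
  split_ifs <;> rfl

lemma eL_ne_zero {g : MvPowerSeries α ℂ} (hg : g ≠ 0) : eL (β := β) g ≠ 0 := by
  intro h
  exact hg (eL_injective (by rw [h, eL_zero]))

lemma eR_ne_zero {h : MvPowerSeries β ℂ} (hh : h ≠ 0) : eR (α := α) h ≠ 0 := by
  intro h2
  exact hh (eR_injective (by rw [h2, eR_zero]))

lemma exists_coeff_ne_zero {γ : Type*} {h : MvPowerSeries γ ℂ} (hh : h ≠ 0) :
    ∃ ν, MvPowerSeries.coeff ν h ≠ 0 := by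
  by_contra hc
  push_neg at hc
  exact hh (MvPowerSeries.ext hc)

lemma eL_dvd_iff (g : MvPowerSeries α ℂ) (P : MvPowerSeries (α ⊕ β) ℂ) :
    eL g ∣ P ↔ ∀ ν, g ∣ sliceL ν P := by
  constructor
  · rintro ⟨c, rfl⟩ ν
    rw [sliceL_eL_mul]
    exact Dvd.intro _ rfl
  · intro hdvd
    choose c hc using hdvd
    refine ⟨(fun mo => MvPowerSeries.coeff (EE α β mo).1 (c (EE α β mo).2) : MvPowerSeries (α ⊕ β) ℂ), ?_⟩
    apply sliceL_ext
    intro ν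
    erw [sliceL_eL_mul]
    have hslice : sliceL ν (fun mo => MvPowerSeries.coeff (EE α β mo).1 (c (EE α β mo).2) :
        MvPowerSeries (α ⊕ β) ℂ) = c ν := by
      apply MvPowerSeries.ext
      intro μ
      show MvPowerSeries.coeff (EE α β ((EE α β).symm (μ, ν))).1
        (c (EE α β ((EE α β).symm (μ, ν))).2) = _
      rw [AddEquiv.apply_symm_apply]
    rw [hslice]
    exact hc ν

lemma eR_dvd_iff (h : MvPowerSeries β ℂ) (P : MvPowerSeries (α ⊕ β) ℂ) :
    eR h ∣ P ↔ ∀ μ, h ∣ sliceR μ P := by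
  constructor
  · rintro ⟨c, rfl⟩ μ
    rw [sliceR_eR_mul]
    exact Dvd.intro _ rfl
  · intro hdvd
    choose c hc using hdvd
    refine ⟨(fun mo => MvPowerSeries.coeff (EE α β mo).2 (c (EE α β mo).1) : MvPowerSeries (α ⊕ β) ℂ), ?_⟩
    apply sliceR_ext
    intro μ
    erw [sliceR_eR_mul]
    have hslice : sliceR μ (fun mo => MvPowerSeries.coeff (EE α β mo).2 (c (EE α β mo).1) :
        MvPowerSeries (α ⊕ β) ℂ) = c μ := by
      apply MvPowerSeries.ext
      intro ν
      show MvPowerSeries.coeff (EE α β ((EE α β).symm (μ, ν))).2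
        (c (EE α β ((EE α β).symm (μ, ν))).1) = _
      rw [AddEquiv.apply_symm_apply]
    rw [hslice]
    exact hc μ

lemma dvd_of_eR_mul [LinearOrder β] [Finite β] {g : MvPowerSeries α ℂ}
    {h : MvPowerSeries β ℂ} (hh : h ≠ 0) {A : MvPowerSeries (α ⊕ β) ℂ}
    (hd : eL g ∣ eR h * A) : eL g ∣ A := by
  rw [eL_dvd_iff] at hd ⊢
  obtain ⟨x₀, hx₀, hmin⟩ := (wellFounded_lt (α := Lex (β →₀ ℕ))).has_min
    {x | MvPowerSeries.coeff (ofLex x) h ≠ 0}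
    (by obtain ⟨ν, hν⟩ := exists_coeff_ne_zero hh; exact ⟨toLex ν, hν⟩)
  have main : ∀ x : Lex (β →₀ ℕ), g ∣ sliceL (ofLex x) A := by
    intro x
    induction x using WellFoundedLT.induction with
    | _ x IH =>
    have hν := hd (ofLex x₀ + ofLex x)
    rw [sliceL_mul] at hν
    have hterm : ∀ p ∈ antidiagonal ((ofLex x₀ : β →₀ ℕ) + ofLex x),
        sliceL p.1 (eR h) * sliceL p.2 A
          = (MvPowerSeries.C (σ := α) (R := ℂ)) (MvPowerSeries.coeff p.1 h) * sliceL p.2 A :=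
      fun p _ => by rw [sliceL_eR]
    rw [Finset.sum_congr rfl hterm] at hν
    have hmem : ((ofLex x₀ : β →₀ ℕ), (ofLex x : β →₀ ℕ))
        ∈ antidiagonal ((ofLex x₀ : β →₀ ℕ) + ofLex x) :=
      HasAntidiagonal.mem_antidiagonal.2 rfl
    rw [← Finset.add_sum_erase _ _ hmem] at hν
    have hrest : g ∣ ∑ p ∈ (antidiagonal ((ofLex x₀ : β →₀ ℕ) + ofLex x)).erase
        (ofLex x₀, ofLex x),
        (MvPowerSeries.C (σ := α) (R := ℂ)) (MvPowerSeries.coeff p.1 h) * sliceL p.2 A := by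
      apply Finset.dvd_sum
      intro p hp
      rw [Finset.mem_erase] at hp
      obtain ⟨hpne, hpmem⟩ := hp
      rw [HasAntidiagonal.mem_antidiagonal] at hpmem
      by_cases hz : MvPowerSeries.coeff p.1 h = 0
      · rw [hz, map_zero, zero_mul]
        exact dvd_zero g
      · have h1 : ¬ (toLex p.1 < x₀) := hmin (toLex p.1) hz
        have hne1 : p.1 ≠ (ofLex x₀ : β →₀ ℕ) := by
          intro hc
          apply hpne
          have h2 : p.2 = (ofLex x : β →₀ ℕ) := by
            have := hpmem
            rw [hc] at this
            exact add_left_cancel this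
          rw [Prod.ext_iff]
          exact ⟨hc, h2⟩
        have hlt1 : x₀ < toLex p.1 :=
          lt_of_le_of_ne (not_lt.1 h1) (fun hc => hne1 (congrArg ofLex hc.symm))
        have hlt2 : toLex p.2 < x := by
          by_contra hcon
          have hle : x ≤ toLex p.2 := not_lt.1 hcon
          have hsum : x₀ + x < toLex p.1 + toLex p.2 := add_lt_add_of_lt_of_le hlt1 hle
          have heq : toLex p.1 + toLex p.2 = x₀ + x := by
            have : (ofLex x₀ : β →₀ ℕ) + ofLex x = p.1 + p.2 := hpmem.symm
            exact congrArg toLex this.symm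
          rw [heq] at hsum
          exact lt_irrefl _ hsum
        exact Dvd.dvd.mul_left (IH _ hlt2) _
    have hT : g ∣ (MvPowerSeries.C (σ := α) (R := ℂ)) (MvPowerSeries.coeff (ofLex x₀ : β →₀ ℕ) h) *
        sliceL (ofLex x) A := by
      have h5 := dvd_sub hν hrest
      rwa [add_sub_cancel_right] at h5
    have hu : IsUnit ((MvPowerSeries.C (σ := α) (R := ℂ)) (MvPowerSeries.coeff (ofLex x₀ : β →₀ ℕ) h)) :=
      IsUnit.map ((MvPowerSeries.C (σ := α) (R := ℂ))) (Ne.isUnit hx₀)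
    obtain ⟨u, hueq⟩ := hu
    rw [← hueq] at hT
    have hfin : sliceL (ofLex x) A = ↑u⁻¹ * (↑u * sliceL (ofLex x) A) := by
      rw [← mul_assoc, Units.inv_mul, one_mul]
    rw [hfin]
    exact Dvd.dvd.mul_left hT _
  intro ν
  simpa using main (toLex ν)

lemma dvd_of_eL_mul [LinearOrder α] [Finite α] {h : MvPowerSeries β ℂ}
    {g : MvPowerSeries α ℂ} (hg : g ≠ 0) {A : MvPowerSeries (α ⊕ β) ℂ}
    (hd : eR h ∣ eL g * A) : eR h ∣ A := by
  rw [eR_dvd_iff] at hd ⊢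
  obtain ⟨x₀, hx₀, hmin⟩ := (wellFounded_lt (α := Lex (α →₀ ℕ))).has_min
    {x | MvPowerSeries.coeff (ofLex x) g ≠ 0}
    (by obtain ⟨μ, hμ⟩ := exists_coeff_ne_zero hg; exact ⟨toLex μ, hμ⟩)
  have main : ∀ x : Lex (α →₀ ℕ), h ∣ sliceR (ofLex x) A := by
    intro x
    induction x using WellFoundedLT.induction with
    | _ x IH =>
    have hν := hd (ofLex x₀ + ofLex x)
    rw [sliceR_mul] at hν
    have hterm : ∀ p ∈ antidiagonal ((ofLex x₀ : α →₀ ℕ) + ofLex x),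
        sliceR p.1 (eL g) * sliceR p.2 A
          = (MvPowerSeries.C (σ := β) (R := ℂ)) (MvPowerSeries.coeff p.1 g) * sliceR p.2 A :=
      fun p _ => by rw [sliceR_eL]
    rw [Finset.sum_congr rfl hterm] at hν
    have hmem : ((ofLex x₀ : α →₀ ℕ), (ofLex x : α →₀ ℕ))
        ∈ antidiagonal ((ofLex x₀ : α →₀ ℕ) + ofLex x) :=
      HasAntidiagonal.mem_antidiagonal.2 rfl
    rw [← Finset.add_sum_erase _ _ hmem] at hν
    have hrest : h ∣ ∑ p ∈ (antidiagonal ((ofLex x₀ : α →₀ ℕ) + ofLex x)).erase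
        (ofLex x₀, ofLex x),
        (MvPowerSeries.C (σ := β) (R := ℂ)) (MvPowerSeries.coeff p.1 g) * sliceR p.2 A := by
      apply Finset.dvd_sum
      intro p hp
      rw [Finset.mem_erase] at hp
      obtain ⟨hpne, hpmem⟩ := hp
      rw [HasAntidiagonal.mem_antidiagonal] at hpmem
      by_cases hz : MvPowerSeries.coeff p.1 g = 0
      · rw [hz, map_zero, zero_mul]
        exact dvd_zero h
      · have h1 : ¬ (toLex p.1 < x₀) := hmin (toLex p.1) hz
        have hne1 : p.1 ≠ (ofLex x₀ : α →₀ ℕ) := by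
          intro hc
          apply hpne
          have h2 : p.2 = (ofLex x : α →₀ ℕ) := by
            have := hpmem
            rw [hc] at this
            exact add_left_cancel this
          rw [Prod.ext_iff]
          exact ⟨hc, h2⟩
        have hlt1 : x₀ < toLex p.1 :=
          lt_of_le_of_ne (not_lt.1 h1) (fun hc => hne1 (congrArg ofLex hc.symm))
        have hlt2 : toLex p.2 < x := by
          by_contra hcon
          have hle : x ≤ toLex p.2 := not_lt.1 hcon
          have hsum : x₀ + x < toLex p.1 + toLex p.2 := add_lt_add_of_lt_of_le hlt1 hle
          have heq : toLex p.1 + toLex p.2 = x₀ + x := by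
            have : (ofLex x₀ : α →₀ ℕ) + ofLex x = p.1 + p.2 := hpmem.symm
            exact congrArg toLex this.symm
          rw [heq] at hsum
          exact lt_irrefl _ hsum
        exact Dvd.dvd.mul_left (IH _ hlt2) _
    have hT : h ∣ (MvPowerSeries.C (σ := β) (R := ℂ)) (MvPowerSeries.coeff (ofLex x₀ : α →₀ ℕ) g) *
        sliceR (ofLex x) A := by
      have h5 := dvd_sub hν hrest
      rwa [add_sub_cancel_right] at h5
    have hu : IsUnit ((MvPowerSeries.C (σ := β) (R := ℂ)) (MvPowerSeries.coeff (ofLex x₀ : α →₀ ℕ) g)) :=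
      IsUnit.map ((MvPowerSeries.C (σ := β) (R := ℂ))) (Ne.isUnit hx₀)
    obtain ⟨u, hueq⟩ := hu
    rw [← hueq] at hT
    have hfin : sliceR (ofLex x) A = ↑u⁻¹ * (↑u * sliceR (ofLex x) A) := by
      rw [← mul_assoc, Units.inv_mul, one_mul]
    rw [hfin]
    exact Dvd.dvd.mul_left hT _
  intro μ
  simpa using main (toLex μ)

lemma EE_add_single_inl (mo : α ⊕ β →₀ ℕ) (i : α) :
    EE α β (mo + Finsupp.single (Sum.inl i) 1)
      = ((EE α β mo).1 + Finsupp.single i 1, (EE α β mo).2) := by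
  rw [map_add, EE_single_inl]
  apply Prod.ext <;> simp

lemma EE_add_single_inr (mo : α ⊕ β →₀ ℕ) (j : β) :
    EE α β (mo + Finsupp.single (Sum.inr j) 1)
      = ((EE α β mo).1, (EE α β mo).2 + Finsupp.single j 1) := by
  rw [map_add, EE_single_inr]
  apply Prod.ext <;> simp

lemma pderiv_inl_eL (i : α) (g : MvPowerSeries α ℂ) :
    pderiv (Sum.inl i) (eL (β := β) g) = eL (pderiv i g) := by
  apply MvPowerSeries.ext
  intro mo
  rw [_root_.coeff_pderiv, coeff_eL, coeff_eL, EE_add_single_inl]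
  by_cases h2 : (EE α β mo).2 = 0
  · rw [if_pos h2, if_pos h2, _root_.coeff_pderiv]
    rw [EE_fst_apply]
  · rw [if_neg h2, if_neg h2, mul_zero]

lemma pderiv_inl_eR (i : α) (h : MvPowerSeries β ℂ) :
    pderiv (Sum.inl i) (eR (α := α) h) = 0 := by
  apply MvPowerSeries.ext
  intro mo
  rw [_root_.coeff_pderiv, coeff_eR, EE_add_single_inl]
  have hne : (EE α β mo).1 + Finsupp.single i 1 ≠ 0 := by
    intro hc
    have := DFunLike.congr_fun hc i
    simp [Finsupp.single_apply] at this
  rw [if_neg hne, mul_zero, map_zero]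

lemma pderiv_inr_eR (j : β) (h : MvPowerSeries β ℂ) :
    pderiv (Sum.inr j) (eR (α := α) h) = eR (pderiv j h) := by
  apply MvPowerSeries.ext
  intro mo
  rw [_root_.coeff_pderiv, coeff_eR, coeff_eR, EE_add_single_inr]
  by_cases h1 : (EE α β mo).1 = 0
  · rw [if_pos h1, if_pos h1, _root_.coeff_pderiv]
    rw [EE_snd_apply]
  · rw [if_neg h1, if_neg h1, mul_zero]

lemma pderiv_inr_eL (j : β) (g : MvPowerSeries α ℂ) :
    pderiv (Sum.inr j) (eL (β := β) g) = 0 := by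
  apply MvPowerSeries.ext
  intro mo
  rw [_root_.coeff_pderiv, coeff_eL, EE_add_single_inr]
  have hne : (EE α β mo).2 + Finsupp.single j 1 ≠ 0 := by
    intro hc
    have := DFunLike.congr_fun hc j
    simp [Finsupp.single_apply] at this
  rw [if_neg hne, mul_zero, map_zero]

lemma eq_zero_of_slicesL {P : MvPowerSeries (α ⊕ β) ℂ}
    (h : ∀ ν, sliceL (α := α) ν P = 0) : P = 0 := by
  apply sliceL_ext
  intro ν
  rw [h ν, sliceL_zero]

lemma sliceL_zero_mul (P Q : MvPowerSeries (α ⊕ β) ℂ) :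
    sliceL (α := α) 0 (P * Q) = sliceL 0 P * sliceL 0 Q := by
  rw [sliceL_mul, Finsupp.antidiagonal_zero, Finset.sum_singleton]

lemma sliceL_X_inr (t : β) :
    sliceL (α := α) 0 (MvPowerSeries.X (Sum.inr t) : MvPowerSeries (α ⊕ β) ℂ) = 0 := by
  apply MvPowerSeries.ext
  intro μ
  rw [coeff_sliceL, MvPowerSeries.coeff_X, if_neg, map_zero]
  intro hc
  have h2 := congrArg (fun w => (EE α β w).2) hc
  simp only [AddEquiv.apply_symm_apply, EE_single_inr] at h2
  exact one_ne_zero (Finsupp.single_eq_zero.1 h2.symm)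

variable [Fintype α] [Fintype β]

/-- Solutions in `ℂ[[x,y]]` to `∑ bᵢ ∂ᵢg ∈ (g)`, for `g ∈ ℂ[[x]]`. -/
noncomputable def SolL (g : MvPowerSeries α ℂ) :
    Submodule (MvPowerSeries (α ⊕ β) ℂ) (α → MvPowerSeries (α ⊕ β) ℂ) where
  carrier := {b | ∑ i, b i * eL (pderiv i g) ∈ Ideal.span {eL (β := β) g}}
  add_mem' := by
    intro a b ha hb
    simp only [Set.mem_setOf_eq, Pi.add_apply, add_mul, Finset.sum_add_distrib]
    exact Ideal.add_mem _ ha hb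
  zero_mem' := by simp
  smul_mem' := by
    intro c a ha
    simp only [Set.mem_setOf_eq, Pi.smul_apply, smul_eq_mul, mul_assoc, ← Finset.mul_sum]
    exact Ideal.mul_mem_left _ _ ha

lemma mem_SolL_iff (g : MvPowerSeries α ℂ) (b : α → MvPowerSeries (α ⊕ β) ℂ) :
    b ∈ SolL g ↔ ∀ ν : β →₀ ℕ, (fun i => sliceL ν (b i)) ∈ SolMod g := by
  have hs : ∀ ν, sliceL ν (∑ i, b i * eL (β := β) (pderiv i g))
      = ∑ i, sliceL ν (b i) * pderiv i g := by
    intro ν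
    rw [sliceL_sum]
    exact Finset.sum_congr rfl fun i _ => sliceL_mul_eL _ _ _
  show ∑ i, b i * eL (pderiv i g) ∈ Ideal.span {eL (β := β) g} ↔ _
  rw [Ideal.mem_span_singleton, eL_dvd_iff]
  apply forall_congr'
  intro ν
  rw [hs ν, mem_solMod_iff, Ideal.mem_span_singleton]

/-- choice function on the `y`-part -/
noncomputable def pkβ (α : Type*) {β : Type*} (ν : β →₀ ℕ) : Option (α ⊕ β) :=
  (pickVar ν).map Sum.inr

noncomputable def pickR (mo : α ⊕ β →₀ ℕ) : Option (α ⊕ β) := pkβ α (EE α β mo).2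

lemma sliceL_splitPart_pickR (b : MvPowerSeries (α ⊕ β) ℂ) (t : β) (ν : β →₀ ℕ) :
    sliceL ν (splitPart pickR (Sum.inr t) b)
      = if pkβ α (ν + Finsupp.single t 1) = some (Sum.inr t)
        then sliceL (ν + Finsupp.single t 1) b else 0 := by
  apply MvPowerSeries.ext
  intro μ
  rw [coeff_sliceL, coeff_splitPart]
  have hsnd : (EE α β ((EE α β).symm (μ, ν) + Finsupp.single (Sum.inr t) 1)).2
      = ν + Finsupp.single t 1 := by
    rw [EE_add_single_inr]
    simp
  have hidx : (EE α β).symm (μ, ν) + Finsupp.single (Sum.inr t) 1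
      = (EE α β).symm (μ, ν + Finsupp.single t 1) := by
    have h1 : (μ, ν + Finsupp.single t 1) = ((μ, ν) : (α →₀ ℕ) × (β →₀ ℕ))
        + (0, Finsupp.single t 1) := by
      rw [Prod.mk_add_mk, add_zero]
    rw [h1, map_add]
    congr 1
    rw [← EE_single_inr (α := α) t, AddEquiv.symm_apply_apply]
  have hpick : pickR ((EE α β).symm (μ, ν) + Finsupp.single (Sum.inr t) 1)
      = pkβ α (ν + Finsupp.single t 1) := by
    show pkβ α (EE α β ((EE α β).symm (μ, ν) + Finsupp.single (Sum.inr t) 1)).2 = _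
    rw [hsnd]
  rw [hpick, hidx]
  by_cases hc : pkβ α (ν + Finsupp.single t 1) = some (Sum.inr t)
  · rw [if_pos hc, if_pos hc, coeff_sliceL]
  · rw [if_neg hc, if_neg hc, map_zero]

lemma split_inr (b : MvPowerSeries (α ⊕ β) ℂ) (h0 : sliceL (α := α) 0 b = 0) :
    b = ∑ t : β, MvPowerSeries.X (Sum.inr t) * splitPart pickR (Sum.inr t) b := by
  have hsp := splitPart_sum (Finset.map ⟨Sum.inr, Sum.inr_injective⟩ Finset.univ) pickR b ?_
  · conv_lhs => rw [hsp]
    rw [Finset.sum_map]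
    rfl
  · intro mo hmo
    have hβ : (EE α β mo).2 ≠ 0 := by
      intro hc
      apply hmo
      have h1 : (EE α β).symm ((EE α β mo).1, (0 : β →₀ ℕ)) = mo := by
        rw [← hc]
        simp
      have h2 : MvPowerSeries.coeff (EE α β mo).1 (sliceL (α := α) 0 b)
          = MvPowerSeries.coeff mo b := by
        rw [coeff_sliceL, h1]
      rw [← h2, h0, map_zero]
    obtain ⟨t, hpt, htν⟩ := pickVar_spec hβ
    refine ⟨Sum.inr t, Finset.mem_map.2 ⟨t, Finset.mem_univ t, rfl⟩, ?_, ?_⟩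
    · show pkβ α (EE α β mo).2 = some (Sum.inr t)
      rw [pkβ, hpt]
      rfl
    · intro hc
      apply htν
      rw [EE_snd_apply]
      exact hc

lemma SolL_split {g : MvPowerSeries α ℂ} {b : α → MvPowerSeries (α ⊕ β) ℂ}
    (hb : b ∈ SolL g) (h0 : ∀ i, sliceL 0 (b i) = 0) :
    ∃ z : β → (α → MvPowerSeries (α ⊕ β) ℂ), (∀ t, z t ∈ SolL g) ∧
      b = ∑ t, (MvPowerSeries.X (Sum.inr t) : MvPowerSeries (α ⊕ β) ℂ) • z t := by
  refine ⟨fun t i => splitPart pickR (Sum.inr t) (b i), ?_, ?_⟩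
  · intro t
    rw [mem_SolL_iff]
    intro ν
    have hz : (fun i => sliceL ν (splitPart pickR (Sum.inr t) (b i)))
        = if pkβ α (ν + Finsupp.single t 1) = some (Sum.inr t)
          then (fun i => sliceL (ν + Finsupp.single t 1) (b i)) else 0 := by
      funext i
      rw [sliceL_splitPart_pickR]
      split_ifs <;> rfl
    rw [hz]
    split_ifs
    · exact (mem_SolL_iff g b).1 hb _
    · exact Submodule.zero_mem _
  · funext i
    simp only [Finset.sum_apply, Pi.smul_apply, smul_eq_mul]
    exact split_inr (b i) (h0 i)

theorem free_SolL_of_free (g : MvPowerSeries α ℂ)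
    (hfree : Module.Free (MvPowerSeries α ℂ) ↥(SolMod g)) :
    Module.Free (MvPowerSeries (α ⊕ β) ℂ) ↥(SolL (β := β) g) := by
  classical
  set ι := Module.Free.ChooseBasisIndex (MvPowerSeries α ℂ) ↥(SolMod g) with hι
  set u : Module.Basis ι (MvPowerSeries α ℂ) ↥(SolMod g) := Module.Free.chooseBasis _ _ with hu
  have hfin : Finite ι := by
    have h1 : Cardinal.mk ι = Module.rank (MvPowerSeries α ℂ) ↥(SolMod g) := u.mk_eq_rank''
    have h2 := Submodule.rank_le (SolMod g)
    rw [rank_fun'] at h2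
    have h3 : Cardinal.mk ι ≤ (Fintype.card α : Cardinal) := h1 ▸ h2
    exact Cardinal.lt_aleph0_iff_finite.1 (lt_of_le_of_lt h3 (Cardinal.nat_lt_aleph0 _))
  haveI := hfin
  haveI : Fintype ι := Fintype.ofFinite ι
  set Φ : (ι → MvPowerSeries (α ⊕ β) ℂ) → (α → MvPowerSeries (α ⊕ β) ℂ) :=
    fun c i => ∑ b2 : ι, c b2 * eL ((u b2 : α → MvPowerSeries α ℂ) i) with hΦ
  have hslice : ∀ c ν i, sliceL ν (Φ c i)
      = ∑ b2 : ι, sliceL ν (c b2) * (u b2 : α → MvPowerSeries α ℂ) i := by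
    intro c ν i
    rw [hΦ]
    simp only
    rw [sliceL_sum]
    exact Finset.sum_congr rfl fun b2 _ => sliceL_mul_eL _ _ _
  have hmem : ∀ c, Φ c ∈ SolL (β := β) g := by
    intro c
    rw [mem_SolL_iff]
    intro ν
    have heq : (fun i => sliceL ν (Φ c i))
        = ((∑ b2 : ι, sliceL ν (c b2) • u b2 : ↥(SolMod g)) : α → MvPowerSeries α ℂ) := by
      funext i
      rw [hslice, AddSubmonoidClass.coe_finset_sum, Finset.sum_apply]
      exact Finset.sum_congr rfl fun b2 _ => rfl
    rw [heq]
    exact Submodule.coe_mem _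
  set Φl : (ι → MvPowerSeries (α ⊕ β) ℂ) →ₗ[MvPowerSeries (α ⊕ β) ℂ] ↥(SolL (β := β) g) :=
    { toFun := fun c => ⟨Φ c, hmem c⟩
      map_add' := by
        intro c d
        apply Subtype.ext
        show Φ (c + d) = Φ c + Φ d
        funext i
        simp only [hΦ, Pi.add_apply, add_mul, Finset.sum_add_distrib]
      map_smul' := by
        intro r c
        apply Subtype.ext
        show Φ (r • c) = r • Φ c
        funext i
        simp only [hΦ, Pi.smul_apply, smul_eq_mul, mul_assoc, ← Finset.mul_sum] } with hΦl
  have hker : ∀ c, Φ c = 0 → c = 0 := by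
    intro c hc0
    have hν : ∀ ν (b2 : ι), sliceL ν (c b2) = 0 := by
      intro ν
      have hrel : ∑ b2 : ι, sliceL ν (c b2) • u b2 = (0 : ↥(SolMod g)) := by
        apply Subtype.ext
        rw [AddSubmonoidClass.coe_finset_sum]
        funext i
        rw [Finset.sum_apply]
        simp only [SetLike.val_smul, Pi.smul_apply, smul_eq_mul]
        rw [← hslice c ν i, hc0]
        simp [sliceL_zero]
      intro b2
      exact Fintype.linearIndependent_iff.1 u.linearIndependent _ hrel b2
    funext b2
    apply eq_zero_of_slicesL
    intro ν
    exact hν ν b2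
  have hinj : Function.Injective Φl := by
    intro c d hcd
    have h8 : Φl (c - d) = 0 := by rw [map_sub, hcd, sub_self]
    have h9 : Φ (c - d) = 0 := congrArg Subtype.val h8
    exact sub_eq_zero.1 (hker _ h9)
  have hsurj : Function.Surjective Φl := by
    rintro ⟨b, hbmem⟩
    have hb := (mem_SolL_iff g b).1 hbmem
    set r : (β →₀ ℕ) → (ι →₀ MvPowerSeries α ℂ) :=
      fun ν => u.repr ⟨fun i => sliceL ν (b i), hb ν⟩ with hr
    set c : ι → MvPowerSeries (α ⊕ β) ℂ :=
      fun b2 mo => MvPowerSeries.coeff (EE α β mo).1 (r (EE α β mo).2 b2) with hcdef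
    have hcslice : ∀ ν b2, sliceL ν (c b2) = r ν b2 := by
      intro ν b2
      apply MvPowerSeries.ext
      intro μ
      show MvPowerSeries.coeff (EE α β ((EE α β).symm (μ, ν))).1
        (r (EE α β ((EE α β).symm (μ, ν))).2 b2) = _
      rw [AddEquiv.apply_symm_apply]
    refine ⟨c, ?_⟩
    apply Subtype.ext
    show Φ c = b
    funext i
    apply sliceL_ext
    intro ν
    rw [hslice, Finset.sum_congr rfl fun b2 _ => by rw [hcslice]]
    have hrepr := u.sum_repr ⟨fun i => sliceL ν (b i), hb ν⟩
    have h10 := congrArg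
      (fun (t : ↥(SolMod g)) => (t : α → MvPowerSeries α ℂ) i) hrepr
    simp only [AddSubmonoidClass.coe_finset_sum, Finset.sum_apply, SetLike.val_smul,
      Pi.smul_apply, smul_eq_mul] at h10
    exact h10
  exact Module.Free.of_equiv (LinearEquiv.ofBijective Φl ⟨hinj, hsurj⟩)

theorem free_solMod_of_free_SolL (g : MvPowerSeries α ℂ)
    (hfree : Module.Free (MvPowerSeries (α ⊕ β) ℂ) ↥(SolL (β := β) g)) :
    Module.Free (MvPowerSeries α ℂ) ↥(SolMod g) := by
  classical
  set ι := Module.Free.ChooseBasisIndex (MvPowerSeries (α ⊕ β) ℂ) ↥(SolL (β := β) g) with hι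
  set w : Module.Basis ι (MvPowerSeries (α ⊕ β) ℂ) ↥(SolL (β := β) g) :=
    Module.Free.chooseBasis _ _ with hw
  have humem : ∀ (bb : ↥(SolL (β := β) g)),
      (fun i => sliceL 0 ((bb : α → MvPowerSeries (α ⊕ β) ℂ) i)) ∈ SolMod g :=
    fun bb => (mem_SolL_iff g _).1 bb.2 0
  set u : ι → ↥(SolMod g) :=
    fun b2 => ⟨fun i => sliceL 0 ((w b2 : α → MvPowerSeries (α ⊕ β) ℂ) i), humem _⟩ with hudef
  have heLmem : ∀ vv : ↥(SolMod g),
      (fun i => eL (β := β) ((vv : α → MvPowerSeries α ℂ) i)) ∈ SolL (β := β) g := by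
    intro vv
    rw [mem_SolL_iff]
    intro ν
    have heq : (fun i => sliceL ν (eL (β := β) ((vv : α → MvPowerSeries α ℂ) i)))
        = if ν = 0 then ((vv : α → MvPowerSeries α ℂ)) else 0 := by
      funext i
      rw [sliceL_eL]
      split_ifs <;> rfl
    rw [heq]
    split_ifs
    · exact vv.2
    · exact Submodule.zero_mem _
  have hspan : ⊤ ≤ Submodule.span (MvPowerSeries α ℂ) (Set.range u) := by
    rintro vv -
    set W : ↥(SolL (β := β) g) := ⟨_, heLmem vv⟩ with hW
    set l : ι →₀ MvPowerSeries (α ⊕ β) ℂ := w.repr W with hldef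
    have hWeq : W = ∑ b2 ∈ l.support, l b2 • w b2 := by
      conv_lhs => rw [← w.linearCombination_repr W]
      simp only [Finsupp.linearCombination_apply, Finsupp.sum]
      rfl
    have hcomp : ∀ i, eL (β := β) ((vv : α → MvPowerSeries α ℂ) i)
        = ∑ b2 ∈ l.support, l b2 * ((w b2 : α → MvPowerSeries (α ⊕ β) ℂ) i) := by
      intro i
      have h5 := congrArg
        (fun (t : ↥(SolL (β := β) g)) => (t : α → MvPowerSeries (α ⊕ β) ℂ) i) hWeq
      simpa [AddSubmonoidClass.coe_finset_sum, Finset.sum_apply, SetLike.val_smul,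
        Pi.smul_apply, smul_eq_mul] using h5
    have hvv : vv = ∑ b2 ∈ l.support, sliceL 0 (l b2) • u b2 := by
      apply Subtype.ext
      rw [AddSubmonoidClass.coe_finset_sum]
      funext i
      rw [Finset.sum_apply]
      have h1 : (vv : α → MvPowerSeries α ℂ) i
          = sliceL 0 (eL (β := β) ((vv : α → MvPowerSeries α ℂ) i)) := by
        rw [sliceL_eL, if_pos rfl]
      rw [h1, hcomp i, sliceL_sum]
      refine Finset.sum_congr rfl fun b2 _ => ?_
      rw [sliceL_zero_mul]
      simp only [SetLike.val_smul, Pi.smul_apply, smul_eq_mul]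
      rfl
    rw [hvv]
    exact Submodule.sum_mem _ fun b2 _ =>
      Submodule.smul_mem _ _ (Submodule.subset_span ⟨b2, rfl⟩)
  have hind : LinearIndependent (MvPowerSeries α ℂ) u := by
    rw [linearIndependent_iff]
    intro l hl
    set W : ↥(SolL (β := β) g) := ∑ b2 ∈ l.support, eL (β := β) (l b2) • w b2 with hWdef
    have hWcoords : ∀ b2, w.repr W b2 = eL (β := β) (l b2) := by
      intro b2
      rw [hWdef, map_sum, Finsupp.finset_sum_apply]
      have hterm : ∀ b3 ∈ l.support, (w.repr (eL (β := β) (l b3) • w b3)) b2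
          = if b3 = b2 then eL (β := β) (l b3) else 0 := by
        intro b3 _
        rw [map_smul, Module.Basis.repr_self, Finsupp.smul_apply, Finsupp.single_apply]
        split_ifs
        · rw [smul_eq_mul, mul_one]
        · rw [smul_eq_mul, mul_zero]
      rw [Finset.sum_congr rfl hterm, Finset.sum_ite_eq' l.support b2
        (fun b3 => eL (β := β) (l b3))]
      by_cases hmem2 : b2 ∈ l.support
      · rw [if_pos hmem2]
      · rw [if_neg hmem2, Finsupp.notMem_support_iff.1 hmem2, eL_zero]
    have hW0 : ∀ i, sliceL 0 ((W : α → MvPowerSeries (α ⊕ β) ℂ) i) = 0 := by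
      intro i
      have hWi : (W : α → MvPowerSeries (α ⊕ β) ℂ) i
          = ∑ b2 ∈ l.support, eL (β := β) (l b2) * ((w b2 : α → MvPowerSeries (α ⊕ β) ℂ) i) := by
        rw [hWdef, AddSubmonoidClass.coe_finset_sum, Finset.sum_apply]
        exact Finset.sum_congr rfl fun b2 _ => rfl
      rw [hWi, sliceL_sum]
      have hterm : ∀ b2 ∈ l.support,
          sliceL 0 (eL (β := β) (l b2) * ((w b2 : α → MvPowerSeries (α ⊕ β) ℂ) i))
          = l b2 * sliceL 0 ((w b2 : α → MvPowerSeries (α ⊕ β) ℂ) i) := fun b2 _ => by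
        rw [sliceL_eL_mul]
      rw [Finset.sum_congr rfl hterm]
      have hl2 := congrArg
        (fun (t : ↥(SolMod g)) => (t : α → MvPowerSeries α ℂ) i) hl
      rw [Finsupp.linearCombination_apply, Finsupp.sum] at hl2
      simpa [AddSubmonoidClass.coe_finset_sum, Finset.sum_apply, SetLike.val_smul,
        Pi.smul_apply, smul_eq_mul, hudef] using hl2
    obtain ⟨z, hz, hzeq⟩ := SolL_split W.2 hW0
    have hWsum : W = ∑ t : β, (MvPowerSeries.X (Sum.inr t) : MvPowerSeries (α ⊕ β) ℂ)
        • (⟨z t, hz t⟩ : ↥(SolL (β := β) g)) := by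
      apply Subtype.ext
      show (W : α → MvPowerSeries (α ⊕ β) ℂ) = _
      rw [hzeq]
      symm
      rw [AddSubmonoidClass.coe_finset_sum]
      exact Finset.sum_congr rfl fun t _ => rfl
    have hfinal : ∀ b2, l b2 = 0 := by
      intro b2
      have h1 : eL (β := β) (l b2)
          = ∑ t : β, MvPowerSeries.X (Sum.inr t) * w.repr ⟨z t, hz t⟩ b2 := by
        rw [← hWcoords b2]
        conv_lhs => rw [hWsum]
        rw [map_sum, Finsupp.finset_sum_apply]
        refine Finset.sum_congr rfl fun t _ => ?_
        rw [map_smul, Finsupp.smul_apply, smul_eq_mul]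
      have h2 : sliceL 0 (eL (β := β) (l b2)) = 0 := by
        rw [h1, sliceL_sum]
        apply Finset.sum_eq_zero
        intro t _
        rw [sliceL_zero_mul, sliceL_X_inr, zero_mul]
      rw [sliceL_eL, if_pos rfl] at h2
      exact h2
    exact DFunLike.ext l 0 fun b2 => hfinal b2
  exact Module.Free.of_basis (Module.Basis.mk hind hspan)

lemma eq_zero_of_slicesR {P : MvPowerSeries (α ⊕ β) ℂ}
    (h : ∀ μ, sliceR (β := β) μ P = 0) : P = 0 := by
  apply sliceR_ext
  intro μ
  rw [h μ, sliceR_zero]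

lemma sliceR_zero_mul (P Q : MvPowerSeries (α ⊕ β) ℂ) :
    sliceR (β := β) 0 (P * Q) = sliceR 0 P * sliceR 0 Q := by
  rw [sliceR_mul, Finsupp.antidiagonal_zero, Finset.sum_singleton]

lemma sliceR_X_inl (t : α) :
    sliceR (β := β) 0 (MvPowerSeries.X (Sum.inl t) : MvPowerSeries (α ⊕ β) ℂ) = 0 := by
  apply MvPowerSeries.ext
  intro ν
  rw [coeff_sliceR, MvPowerSeries.coeff_X, if_neg, map_zero]
  intro hc
  have h2 := congrArg (fun w => (EE α β w).1) hc
  simp only [AddEquiv.apply_symm_apply, EE_single_inl] at h2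
  exact one_ne_zero (Finsupp.single_eq_zero.1 h2.symm)

variable [Fintype α] [Fintype β]

/-- Solutions in `ℂ[[x,y]]` to `∑ bⱼ ∂ⱼh ∈ (h)`, for `h ∈ ℂ[[y]]`. -/
noncomputable def SolR (h : MvPowerSeries β ℂ) :
    Submodule (MvPowerSeries (α ⊕ β) ℂ) (β → MvPowerSeries (α ⊕ β) ℂ) where
  carrier := {b | ∑ j, b j * eR (pderiv j h) ∈ Ideal.span {eR (α := α) h}}
  add_mem' := by
    intro a b ha hb
    simp only [Set.mem_setOf_eq, Pi.add_apply, add_mul, Finset.sum_add_distrib]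
    exact Ideal.add_mem _ ha hb
  zero_mem' := by simp
  smul_mem' := by
    intro c a ha
    simp only [Set.mem_setOf_eq, Pi.smul_apply, smul_eq_mul, mul_assoc, ← Finset.mul_sum]
    exact Ideal.mul_mem_left _ _ ha

lemma mem_SolR_iff (h : MvPowerSeries β ℂ) (b : β → MvPowerSeries (α ⊕ β) ℂ) :
    b ∈ SolR h ↔ ∀ μ : α →₀ ℕ, (fun j => sliceR μ (b j)) ∈ SolMod h := by
  have hs : ∀ μ, sliceR μ (∑ j, b j * eR (α := α) (pderiv j h))
      = ∑ j, sliceR μ (b j) * pderiv j h := by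
    intro μ
    rw [sliceR_sum]
    exact Finset.sum_congr rfl fun j _ => sliceR_mul_eR _ _ _
  show ∑ j, b j * eR (pderiv j h) ∈ Ideal.span {eR (α := α) h} ↔ _
  rw [Ideal.mem_span_singleton, eR_dvd_iff]
  apply forall_congr'
  intro μ
  rw [hs μ, mem_solMod_iff, Ideal.mem_span_singleton]

/-- choice function on the `x`-part -/
noncomputable def pkα (β : Type*) {α : Type*} (μ : α →₀ ℕ) : Option (α ⊕ β) :=
  (pickVar μ).map Sum.inl

noncomputable def pickL (mo : α ⊕ β →₀ ℕ) : Option (α ⊕ β) := pkα β (EE α β mo).1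

lemma sliceR_splitPart_pickL (b : MvPowerSeries (α ⊕ β) ℂ) (t : α) (μ : α →₀ ℕ) :
    sliceR μ (splitPart pickL (Sum.inl t) b)
      = if pkα β (μ + Finsupp.single t 1) = some (Sum.inl t)
        then sliceR (μ + Finsupp.single t 1) b else 0 := by
  apply MvPowerSeries.ext
  intro ν
  rw [coeff_sliceR, coeff_splitPart]
  have hfst : (EE α β ((EE α β).symm (μ, ν) + Finsupp.single (Sum.inl t) 1)).1
      = μ + Finsupp.single t 1 := by
    rw [EE_add_single_inl]
    simp
  have hidx : (EE α β).symm (μ, ν) + Finsupp.single (Sum.inl t) 1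
      = (EE α β).symm (μ + Finsupp.single t 1, ν) := by
    have h1 : (μ + Finsupp.single t 1, ν) = ((μ, ν) : (α →₀ ℕ) × (β →₀ ℕ))
        + (Finsupp.single t 1, 0) := by
      rw [Prod.mk_add_mk, add_zero]
    rw [h1, map_add]
    congr 1
    rw [← EE_single_inl (β := β) t, AddEquiv.symm_apply_apply]
  have hpick : pickL ((EE α β).symm (μ, ν) + Finsupp.single (Sum.inl t) 1)
      = pkα β (μ + Finsupp.single t 1) := by
    show pkα β (EE α β ((EE α β).symm (μ, ν) + Finsupp.single (Sum.inl t) 1)).1 = _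
    rw [hfst]
  rw [hpick, hidx]
  by_cases hc : pkα β (μ + Finsupp.single t 1) = some (Sum.inl t)
  · rw [if_pos hc, if_pos hc, coeff_sliceR]
  · rw [if_neg hc, if_neg hc, map_zero]

lemma split_inl (b : MvPowerSeries (α ⊕ β) ℂ) (h0 : sliceR (β := β) 0 b = 0) :
    b = ∑ t : α, MvPowerSeries.X (Sum.inl t) * splitPart pickL (Sum.inl t) b := by
  have hsp := splitPart_sum (Finset.map ⟨Sum.inl, Sum.inl_injective⟩ Finset.univ) pickL b ?_
  · conv_lhs => rw [hsp]
    rw [Finset.sum_map]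
    rfl
  · intro mo hmo
    have hα : (EE α β mo).1 ≠ 0 := by
      intro hc
      apply hmo
      have h1 : (EE α β).symm ((0 : α →₀ ℕ), (EE α β mo).2) = mo := by
        rw [← hc]
        simp
      have h2 : MvPowerSeries.coeff (EE α β mo).2 (sliceR (β := β) 0 b)
          = MvPowerSeries.coeff mo b := by
        rw [coeff_sliceR, h1]
      rw [← h2, h0, map_zero]
    obtain ⟨t, hpt, htμ⟩ := pickVar_spec hα
    refine ⟨Sum.inl t, Finset.mem_map.2 ⟨t, Finset.mem_univ t, rfl⟩, ?_, ?_⟩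
    · show pkα β (EE α β mo).1 = some (Sum.inl t)
      rw [pkα, hpt]
      rfl
    · intro hc
      apply htμ
      rw [EE_fst_apply]
      exact hc

lemma SolR_split {h : MvPowerSeries β ℂ} {b : β → MvPowerSeries (α ⊕ β) ℂ}
    (hb : b ∈ SolR h) (h0 : ∀ j, sliceR 0 (b j) = 0) :
    ∃ z : α → (β → MvPowerSeries (α ⊕ β) ℂ), (∀ t, z t ∈ SolR h) ∧
      b = ∑ t, (MvPowerSeries.X (Sum.inl t) : MvPowerSeries (α ⊕ β) ℂ) • z t := by
  refine ⟨fun t j => splitPart pickL (Sum.inl t) (b j), ?_, ?_⟩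
  · intro t
    rw [mem_SolR_iff]
    intro μ
    have hz : (fun j => sliceR μ (splitPart pickL (Sum.inl t) (b j)))
        = if pkα β (μ + Finsupp.single t 1) = some (Sum.inl t)
          then (fun j => sliceR (μ + Finsupp.single t 1) (b j)) else 0 := by
      funext j
      rw [sliceR_splitPart_pickL]
      split_ifs <;> rfl
    rw [hz]
    split_ifs
    · exact (mem_SolR_iff h b).1 hb _
    · exact Submodule.zero_mem _
  · funext j
    simp only [Finset.sum_apply, Pi.smul_apply, smul_eq_mul]
    exact split_inl (b j) (h0 j)

theorem free_SolR_of_free (h : MvPowerSeries β ℂ)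
    (hfree : Module.Free (MvPowerSeries β ℂ) ↥(SolMod h)) :
    Module.Free (MvPowerSeries (α ⊕ β) ℂ) ↥(SolR (α := α) h) := by
  classical
  set ι := Module.Free.ChooseBasisIndex (MvPowerSeries β ℂ) ↥(SolMod h) with hι
  set u : Module.Basis ι (MvPowerSeries β ℂ) ↥(SolMod h) := Module.Free.chooseBasis _ _ with hu
  have hfin : Finite ι := by
    have h1 : Cardinal.mk ι = Module.rank (MvPowerSeries β ℂ) ↥(SolMod h) := u.mk_eq_rank''
    have h2 := Submodule.rank_le (SolMod h)
    rw [rank_fun'] at h2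
    have h3 : Cardinal.mk ι ≤ (Fintype.card β : Cardinal) := h1 ▸ h2
    exact Cardinal.lt_aleph0_iff_finite.1 (lt_of_le_of_lt h3 (Cardinal.nat_lt_aleph0 _))
  haveI := hfin
  haveI : Fintype ι := Fintype.ofFinite ι
  set Φ : (ι → MvPowerSeries (α ⊕ β) ℂ) → (β → MvPowerSeries (α ⊕ β) ℂ) :=
    fun c j => ∑ b2 : ι, c b2 * eR ((u b2 : β → MvPowerSeries β ℂ) j) with hΦ
  have hslice : ∀ c μ j, sliceR μ (Φ c j)
      = ∑ b2 : ι, sliceR μ (c b2) * (u b2 : β → MvPowerSeries β ℂ) j := by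
    intro c μ j
    rw [hΦ]
    simp only
    rw [sliceR_sum]
    exact Finset.sum_congr rfl fun b2 _ => sliceR_mul_eR _ _ _
  have hmem : ∀ c, Φ c ∈ SolR (α := α) h := by
    intro c
    rw [mem_SolR_iff]
    intro μ
    have heq : (fun j => sliceR μ (Φ c j))
        = ((∑ b2 : ι, sliceR μ (c b2) • u b2 : ↥(SolMod h)) : β → MvPowerSeries β ℂ) := by
      funext j
      rw [hslice, AddSubmonoidClass.coe_finset_sum, Finset.sum_apply]
      exact Finset.sum_congr rfl fun b2 _ => rfl
    rw [heq]
    exact Submodule.coe_mem _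
  set Φl : (ι → MvPowerSeries (α ⊕ β) ℂ) →ₗ[MvPowerSeries (α ⊕ β) ℂ] ↥(SolR (α := α) h) :=
    { toFun := fun c => ⟨Φ c, hmem c⟩
      map_add' := by
        intro c d
        apply Subtype.ext
        show Φ (c + d) = Φ c + Φ d
        funext j
        simp only [hΦ, Pi.add_apply, add_mul, Finset.sum_add_distrib]
      map_smul' := by
        intro r c
        apply Subtype.ext
        show Φ (r • c) = r • Φ c
        funext j
        simp only [hΦ, Pi.smul_apply, smul_eq_mul, mul_assoc, ← Finset.mul_sum] } with hΦl
  have hker : ∀ c, Φ c = 0 → c = 0 := by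
    intro c hc0
    have hν : ∀ μ (b2 : ι), sliceR μ (c b2) = 0 := by
      intro μ
      have hrel : ∑ b2 : ι, sliceR μ (c b2) • u b2 = (0 : ↥(SolMod h)) := by
        apply Subtype.ext
        rw [AddSubmonoidClass.coe_finset_sum]
        funext j
        rw [Finset.sum_apply]
        simp only [SetLike.val_smul, Pi.smul_apply, smul_eq_mul]
        rw [← hslice c μ j, hc0]
        simp [sliceR_zero]
      intro b2
      exact Fintype.linearIndependent_iff.1 u.linearIndependent _ hrel b2
    funext b2
    apply eq_zero_of_slicesR
    intro μ
    exact hν μ b2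
  have hinj : Function.Injective Φl := by
    intro c d hcd
    have h8 : Φl (c - d) = 0 := by rw [map_sub, hcd, sub_self]
    have h9 : Φ (c - d) = 0 := congrArg Subtype.val h8
    exact sub_eq_zero.1 (hker _ h9)
  have hsurj : Function.Surjective Φl := by
    rintro ⟨b, hbmem⟩
    have hb := (mem_SolR_iff h b).1 hbmem
    set r : (α →₀ ℕ) → (ι →₀ MvPowerSeries β ℂ) :=
      fun μ => u.repr ⟨fun j => sliceR μ (b j), hb μ⟩ with hr
    set c : ι → MvPowerSeries (α ⊕ β) ℂ :=
      fun b2 mo => MvPowerSeries.coeff (EE α β mo).2 (r (EE α β mo).1 b2) with hcdef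
    have hcslice : ∀ μ b2, sliceR μ (c b2) = r μ b2 := by
      intro μ b2
      apply MvPowerSeries.ext
      intro ν
      show MvPowerSeries.coeff (EE α β ((EE α β).symm (μ, ν))).2
        (r (EE α β ((EE α β).symm (μ, ν))).1 b2) = _
      rw [AddEquiv.apply_symm_apply]
    refine ⟨c, ?_⟩
    apply Subtype.ext
    show Φ c = b
    funext j
    apply sliceR_ext
    intro μ
    rw [hslice, Finset.sum_congr rfl fun b2 _ => by rw [hcslice]]
    have hrepr := u.sum_repr ⟨fun j => sliceR μ (b j), hb μ⟩
    have h10 := congrArg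
      (fun (t : ↥(SolMod h)) => (t : β → MvPowerSeries β ℂ) j) hrepr
    simp only [AddSubmonoidClass.coe_finset_sum, Finset.sum_apply, SetLike.val_smul,
      Pi.smul_apply, smul_eq_mul] at h10
    exact h10
  exact Module.Free.of_equiv (LinearEquiv.ofBijective Φl ⟨hinj, hsurj⟩)

theorem free_solMod_of_free_SolR (h : MvPowerSeries β ℂ)
    (hfree : Module.Free (MvPowerSeries (α ⊕ β) ℂ) ↥(SolR (α := α) h)) :
    Module.Free (MvPowerSeries β ℂ) ↥(SolMod h) := by
  classical
  set ι := Module.Free.ChooseBasisIndex (MvPowerSeries (α ⊕ β) ℂ) ↥(SolR (α := α) h) with hι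
  set w : Module.Basis ι (MvPowerSeries (α ⊕ β) ℂ) ↥(SolR (α := α) h) :=
    Module.Free.chooseBasis _ _ with hw
  have humem : ∀ (bb : ↥(SolR (α := α) h)),
      (fun j => sliceR 0 ((bb : β → MvPowerSeries (α ⊕ β) ℂ) j)) ∈ SolMod h :=
    fun bb => (mem_SolR_iff h _).1 bb.2 0
  set u : ι → ↥(SolMod h) :=
    fun b2 => ⟨fun j => sliceR 0 ((w b2 : β → MvPowerSeries (α ⊕ β) ℂ) j), humem _⟩ with hudef
  have heRmem : ∀ vv : ↥(SolMod h),
      (fun j => eR (α := α) ((vv : β → MvPowerSeries β ℂ) j)) ∈ SolR (α := α) h := by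
    intro vv
    rw [mem_SolR_iff]
    intro μ
    have heq : (fun j => sliceR μ (eR (α := α) ((vv : β → MvPowerSeries β ℂ) j)))
        = if μ = 0 then ((vv : β → MvPowerSeries β ℂ)) else 0 := by
      funext j
      rw [sliceR_eR]
      split_ifs <;> rfl
    rw [heq]
    split_ifs
    · exact vv.2
    · exact Submodule.zero_mem _
  have hspan : ⊤ ≤ Submodule.span (MvPowerSeries β ℂ) (Set.range u) := by
    rintro vv -
    set W : ↥(SolR (α := α) h) := ⟨_, heRmem vv⟩ with hW
    set l : ι →₀ MvPowerSeries (α ⊕ β) ℂ := w.repr W with hldef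
    have hWeq : W = ∑ b2 ∈ l.support, l b2 • w b2 := by
      conv_lhs => rw [← w.linearCombination_repr W]
      simp only [Finsupp.linearCombination_apply, Finsupp.sum]
      rfl
    have hcomp : ∀ j, eR (α := α) ((vv : β → MvPowerSeries β ℂ) j)
        = ∑ b2 ∈ l.support, l b2 * ((w b2 : β → MvPowerSeries (α ⊕ β) ℂ) j) := by
      intro j
      have h5 := congrArg
        (fun (t : ↥(SolR (α := α) h)) => (t : β → MvPowerSeries (α ⊕ β) ℂ) j) hWeq
      simpa [AddSubmonoidClass.coe_finset_sum, Finset.sum_apply, SetLike.val_smul,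
        Pi.smul_apply, smul_eq_mul] using h5
    have hvv : vv = ∑ b2 ∈ l.support, sliceR 0 (l b2) • u b2 := by
      apply Subtype.ext
      rw [AddSubmonoidClass.coe_finset_sum]
      funext j
      rw [Finset.sum_apply]
      have h1 : (vv : β → MvPowerSeries β ℂ) j
          = sliceR 0 (eR (α := α) ((vv : β → MvPowerSeries β ℂ) j)) := by
        rw [sliceR_eR, if_pos rfl]
      rw [h1, hcomp j, sliceR_sum]
      refine Finset.sum_congr rfl fun b2 _ => ?_
      rw [sliceR_zero_mul]
      simp only [SetLike.val_smul, Pi.smul_apply, smul_eq_mul]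
      rfl
    rw [hvv]
    exact Submodule.sum_mem _ fun b2 _ =>
      Submodule.smul_mem _ _ (Submodule.subset_span ⟨b2, rfl⟩)
  have hind : LinearIndependent (MvPowerSeries β ℂ) u := by
    rw [linearIndependent_iff]
    intro l hl
    set W : ↥(SolR (α := α) h) := ∑ b2 ∈ l.support, eR (α := α) (l b2) • w b2 with hWdef
    have hWcoords : ∀ b2, w.repr W b2 = eR (α := α) (l b2) := by
      intro b2
      rw [hWdef, map_sum, Finsupp.finset_sum_apply]
      have hterm : ∀ b3 ∈ l.support, (w.repr (eR (α := α) (l b3) • w b3)) b2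
          = if b3 = b2 then eR (α := α) (l b3) else 0 := by
        intro b3 _
        rw [map_smul, Module.Basis.repr_self, Finsupp.smul_apply, Finsupp.single_apply]
        split_ifs
        · rw [smul_eq_mul, mul_one]
        · rw [smul_eq_mul, mul_zero]
      rw [Finset.sum_congr rfl hterm, Finset.sum_ite_eq' l.support b2
        (fun b3 => eR (α := α) (l b3))]
      by_cases hmem2 : b2 ∈ l.support
      · rw [if_pos hmem2]
      · rw [if_neg hmem2, Finsupp.notMem_support_iff.1 hmem2, eR_zero]
    have hW0 : ∀ j, sliceR 0 ((W : β → MvPowerSeries (α ⊕ β) ℂ) j) = 0 := by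
      intro j
      have hWi : (W : β → MvPowerSeries (α ⊕ β) ℂ) j
          = ∑ b2 ∈ l.support, eR (α := α) (l b2) * ((w b2 : β → MvPowerSeries (α ⊕ β) ℂ) j) := by
        rw [hWdef, AddSubmonoidClass.coe_finset_sum, Finset.sum_apply]
        exact Finset.sum_congr rfl fun b2 _ => rfl
      rw [hWi, sliceR_sum]
      have hterm : ∀ b2 ∈ l.support,
          sliceR 0 (eR (α := α) (l b2) * ((w b2 : β → MvPowerSeries (α ⊕ β) ℂ) j))
          = l b2 * sliceR 0 ((w b2 : β → MvPowerSeries (α ⊕ β) ℂ) j) := fun b2 _ => by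
        rw [sliceR_eR_mul]
      rw [Finset.sum_congr rfl hterm]
      have hl2 := congrArg
        (fun (t : ↥(SolMod h)) => (t : β → MvPowerSeries β ℂ) j) hl
      rw [Finsupp.linearCombination_apply, Finsupp.sum] at hl2
      simpa [AddSubmonoidClass.coe_finset_sum, Finset.sum_apply, SetLike.val_smul,
        Pi.smul_apply, smul_eq_mul, hudef] using hl2
    obtain ⟨z, hz, hzeq⟩ := SolR_split W.2 hW0
    have hWsum : W = ∑ t : α, (MvPowerSeries.X (Sum.inl t) : MvPowerSeries (α ⊕ β) ℂ)
        • (⟨z t, hz t⟩ : ↥(SolR (α := α) h)) := by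
      apply Subtype.ext
      show (W : β → MvPowerSeries (α ⊕ β) ℂ) = _
      rw [hzeq]
      symm
      rw [AddSubmonoidClass.coe_finset_sum]
      exact Finset.sum_congr rfl fun t _ => rfl
    have hfinal : ∀ b2, l b2 = 0 := by
      intro b2
      have h1 : eR (α := α) (l b2)
          = ∑ t : α, MvPowerSeries.X (Sum.inl t) * w.repr ⟨z t, hz t⟩ b2 := by
        rw [← hWcoords b2]
        conv_lhs => rw [hWsum]
        rw [map_sum, Finsupp.finset_sum_apply]
        refine Finset.sum_congr rfl fun t _ => ?_
        rw [map_smul, Finsupp.smul_apply, smul_eq_mul]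
      have h2 : sliceR 0 (eR (α := α) (l b2)) = 0 := by
        rw [h1, sliceR_sum]
        apply Finset.sum_eq_zero
        intro t _
        rw [sliceR_zero_mul, sliceR_X_inl, zero_mul]
      rw [sliceR_eR, if_pos rfl] at h2
      exact h2
    exact DFunLike.ext l 0 fun b2 => hfinal b2
  exact Module.Free.of_basis (Module.Basis.mk hind hspan)

lemma mem_SolL_def (g : MvPowerSeries α ℂ) (b : α → MvPowerSeries (α ⊕ β) ℂ) :
    b ∈ SolL (β := β) g ↔
      ∑ i, b i * eL (pderiv i g) ∈ Ideal.span {eL (β := β) g} := Iff.rfl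

lemma mem_SolR_def (h : MvPowerSeries β ℂ) (b : β → MvPowerSeries (α ⊕ β) ℂ) :
    b ∈ SolR (α := α) h ↔
      ∑ j, b j * eR (pderiv j h) ∈ Ideal.span {eR (α := α) h} := Iff.rfl

lemma pderiv_inl_mul (g : MvPowerSeries α ℂ) (h : MvPowerSeries β ℂ) (i : α) :
    pderiv (Sum.inl i) (eL g * eR h) = eR h * eL (β := β) (pderiv i g) := by
  rw [pderiv_mul, pderiv_inl_eR, pderiv_inl_eL, mul_zero, zero_add]

lemma pderiv_inr_mul (g : MvPowerSeries α ℂ) (h : MvPowerSeries β ℂ) (j : β) :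
    pderiv (Sum.inr j) (eL g * eR h) = eL g * eR (α := α) (pderiv j h) := by
  rw [pderiv_mul, pderiv_inr_eR, pderiv_inr_eL, mul_zero, add_zero]

lemma dvd_mul_split [LinearOrder α] [LinearOrder β]
    {g : MvPowerSeries α ℂ} {h : MvPowerSeries β ℂ} (hg : g ≠ 0) (hh : h ≠ 0)
    (A B : MvPowerSeries (α ⊕ β) ℂ) :
    eL g * eR h ∣ eR h * A + eL g * B ↔ (eL (β := β) g ∣ A ∧ eR (α := α) h ∣ B) := by
  constructor
  · rintro ⟨c, hc⟩
    have hGA : eL g ∣ eR h * A := by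
      refine ⟨eR h * c - B, ?_⟩
      rw [mul_sub]
      rw [show eL g * (eR h * c) = (eL g * eR h) * c by ring, ← hc]
      ring
    have hHB : eR h ∣ eL g * B := by
      refine ⟨eL g * c - A, ?_⟩
      rw [mul_sub]
      rw [show eR h * (eL g * c) = (eL g * eR h) * c by ring, ← hc]
      ring
    exact ⟨dvd_of_eR_mul hh hGA, dvd_of_eL_mul hg hHB⟩
  · rintro ⟨⟨A', hA'⟩, ⟨B', hB'⟩⟩
    exact ⟨B' + A', by rw [hA', hB']; ring⟩

lemma mem_solMod_prod_iff [LinearOrder α] [LinearOrder β]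
    {g : MvPowerSeries α ℂ} {h : MvPowerSeries β ℂ} (hg : g ≠ 0) (hh : h ≠ 0)
    (a : (α ⊕ β) → MvPowerSeries (α ⊕ β) ℂ) :
    a ∈ SolMod (eL g * eR h) ↔ ((fun i => a (Sum.inl i)) ∈ SolL (β := β) g
      ∧ (fun j => a (Sum.inr j)) ∈ SolR (α := α) h) := by
  rw [mem_solMod_iff, Ideal.mem_span_singleton, mem_SolL_def, mem_SolR_def,
    Ideal.mem_span_singleton, Ideal.mem_span_singleton]
  have hsum : ∑ s, a s * pderiv s (eL g * eR h)
      = eR h * (∑ i, a (Sum.inl i) * eL (pderiv i g))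
        + eL g * (∑ j, a (Sum.inr j) * eR (pderiv j h)) := by
    rw [Fintype.sum_sum_type]
    congr 1
    · rw [Finset.mul_sum]
      refine Finset.sum_congr rfl fun i _ => ?_
      rw [pderiv_inl_mul]
      ring
    · rw [Finset.mul_sum]
      refine Finset.sum_congr rfl fun j _ => ?_
      rw [pderiv_inr_mul]
      ring
  rw [hsum, dvd_mul_split hg hh]

noncomputable def solProdEquiv [LinearOrder α] [LinearOrder β]
    {g : MvPowerSeries α ℂ} {h : MvPowerSeries β ℂ} (hg : g ≠ 0) (hh : h ≠ 0) :
    ↥(SolMod (eL g * eR h)) ≃ₗ[MvPowerSeries (α ⊕ β) ℂ]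
      (↥(SolL (β := β) g) × ↥(SolR (α := α) h)) where
  toFun a := (⟨fun i => (a : (α ⊕ β) → MvPowerSeries (α ⊕ β) ℂ) (Sum.inl i),
        ((mem_solMod_prod_iff hg hh _).1 a.2).1⟩,
      ⟨fun j => (a : (α ⊕ β) → MvPowerSeries (α ⊕ β) ℂ) (Sum.inr j),
        ((mem_solMod_prod_iff hg hh _).1 a.2).2⟩)
  map_add' a b := by
    refine Prod.ext (Subtype.ext ?_) (Subtype.ext ?_) <;> rfl
  map_smul' r a := by
    refine Prod.ext (Subtype.ext ?_) (Subtype.ext ?_) <;> rfl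
  invFun p := ⟨Sum.elim (p.1 : α → MvPowerSeries (α ⊕ β) ℂ) (p.2 : β → MvPowerSeries (α ⊕ β) ℂ),
    (mem_solMod_prod_iff hg hh _).2 ⟨p.1.2, p.2.2⟩⟩
  left_inv a := Subtype.ext (funext fun s => by cases s <;> rfl)
  right_inv p := Prod.ext (Subtype.ext (funext fun i => rfl)) (Subtype.ext (funext fun j => rfl))

theorem free_solMod_mul_iff [LinearOrder α] [LinearOrder β]
    {g : MvPowerSeries α ℂ} {h : MvPowerSeries β ℂ} (hg : g ≠ 0) (hh : h ≠ 0) :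
    Module.Free (MvPowerSeries (α ⊕ β) ℂ) ↥(SolMod (eL g * eR h))
      ↔ (Module.Free (MvPowerSeries α ℂ) ↥(SolMod g)
          ∧ Module.Free (MvPowerSeries β ℂ) ↥(SolMod h)) := by
  constructor
  · intro hfree
    haveI := hfree
    haveI hfree2 : Module.Free (MvPowerSeries (α ⊕ β) ℂ)
        (↥(SolL (β := β) g) × ↥(SolR (α := α) h)) :=
      Module.Free.of_equiv (solProdEquiv hg hh)
    -- finiteness of the big solution module
    have hfin : Finite (Module.Free.ChooseBasisIndex (MvPowerSeries (α ⊕ β) ℂ)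
        ↥(SolMod (eL g * eR h))) := by
      set w := Module.Free.chooseBasis (MvPowerSeries (α ⊕ β) ℂ) ↥(SolMod (eL g * eR h))
      have h1 : Cardinal.mk (Module.Free.ChooseBasisIndex (MvPowerSeries (α ⊕ β) ℂ)
          ↥(SolMod (eL g * eR h)))
          = Module.rank (MvPowerSeries (α ⊕ β) ℂ) ↥(SolMod (eL g * eR h)) := w.mk_eq_rank''
      have h2 := Submodule.rank_le (SolMod (eL g * eR h))
      rw [rank_fun'] at h2
      have h3 := h1 ▸ h2
      exact Cardinal.lt_aleph0_iff_finite.1 (lt_of_le_of_lt h3 (Cardinal.nat_lt_aleph0 _))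
    haveI := hfin
    haveI : Fintype (Module.Free.ChooseBasisIndex (MvPowerSeries (α ⊕ β) ℂ)
        ↥(SolMod (eL g * eR h))) := Fintype.ofFinite _
    haveI : Module.Finite (MvPowerSeries (α ⊕ β) ℂ) ↥(SolMod (eL g * eR h)) :=
      Module.Finite.of_basis (Module.Free.chooseBasis _ _)
    haveI : Module.Finite (MvPowerSeries (α ⊕ β) ℂ)
        (↥(SolL (β := β) g) × ↥(SolR (α := α) h)) :=
      Module.Finite.equiv (solProdEquiv hg hh)
    haveI hfinL : Module.Finite (MvPowerSeries (α ⊕ β) ℂ) ↥(SolL (β := β) g) :=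
      Module.Finite.of_surjective
        (LinearMap.fst (MvPowerSeries (α ⊕ β) ℂ) ↥(SolL (β := β) g) ↥(SolR (α := α) h))
        Prod.fst_surjective
    haveI hfinR : Module.Finite (MvPowerSeries (α ⊕ β) ℂ) ↥(SolR (α := α) h) :=
      Module.Finite.of_surjective
        (LinearMap.snd (MvPowerSeries (α ⊕ β) ℂ) ↥(SolL (β := β) g) ↥(SolR (α := α) h))
        Prod.snd_surjective
    haveI hprojL : Module.Projective (MvPowerSeries (α ⊕ β) ℂ) ↥(SolL (β := β) g) :=
      Module.Projective.of_split
        (LinearMap.inl (MvPowerSeries (α ⊕ β) ℂ) ↥(SolL (β := β) g) ↥(SolR (α := α) h))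
        (LinearMap.fst (MvPowerSeries (α ⊕ β) ℂ) ↥(SolL (β := β) g) ↥(SolR (α := α) h))
        (LinearMap.ext fun x => rfl)
    haveI hprojR : Module.Projective (MvPowerSeries (α ⊕ β) ℂ) ↥(SolR (α := α) h) :=
      Module.Projective.of_split
        (LinearMap.inr (MvPowerSeries (α ⊕ β) ℂ) ↥(SolL (β := β) g) ↥(SolR (α := α) h))
        (LinearMap.snd (MvPowerSeries (α ⊕ β) ℂ) ↥(SolL (β := β) g) ↥(SolR (α := α) h))
        (LinearMap.ext fun x => rfl)
    haveI : Module.FinitePresentation (MvPowerSeries (α ⊕ β) ℂ) ↥(SolL (β := β) g) :=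
      Module.finitePresentation_of_projective _ _
    haveI : Module.FinitePresentation (MvPowerSeries (α ⊕ β) ℂ) ↥(SolR (α := α) h) :=
      Module.finitePresentation_of_projective _ _
    haveI hfreeL : Module.Free (MvPowerSeries (α ⊕ β) ℂ) ↥(SolL (β := β) g) :=
      Module.free_of_flat_of_isLocalRing
    haveI hfreeR : Module.Free (MvPowerSeries (α ⊕ β) ℂ) ↥(SolR (α := α) h) :=
      Module.free_of_flat_of_isLocalRing
    exact ⟨free_solMod_of_free_SolL g hfreeL, free_solMod_of_free_SolR h hfreeR⟩
  · rintro ⟨hgf, hhf⟩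
    haveI := free_SolL_of_free (β := β) g hgf
    haveI := free_SolR_of_free (α := α) h hhf
    exact Module.Free.of_equiv (solProdEquiv hg hh).symm

end AB


section Stmt8

variable {n m : ℕ}

/-- The canonical inclusion `ℂ[[x₁,…,xₙ]] ⊆ ℂ[[x₁,…,xₙ,y₁,…,y_m]]`, described on
coefficients. -/
noncomputable def extX (f : MvPowerSeries (Fin n) ℂ) : MvPowerSeries (Fin n ⊕ Fin m) ℂ :=
  fun mo =>
    if (Finsupp.sumFinsuppEquivProdFinsupp mo).2 = 0 then
      MvPowerSeries.coeff (Finsupp.sumFinsuppEquivProdFinsupp mo).1 f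
    else 0

/-- The canonical inclusion `ℂ[[y₁,…,y_m]] ⊆ ℂ[[x₁,…,xₙ,y₁,…,y_m]]`, described on
coefficients. -/
noncomputable def extY (f : MvPowerSeries (Fin m) ℂ) : MvPowerSeries (Fin n ⊕ Fin m) ℂ :=
  fun mo =>
    if (Finsupp.sumFinsuppEquivProdFinsupp mo).1 = 0 then
      MvPowerSeries.coeff (Finsupp.sumFinsuppEquivProdFinsupp mo).2 f
    else 0

/-- Freeness of splayed divisors: for reduced `g ∈ ℂ[[x]]` and `h ∈ ℂ[[y]]`, the module
`Der(log gh)` is free over `ℂ[[x,y]]` iff `Der_{ℂ[[x]]}(log g)` is free over `ℂ[[x]]` and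
`Der_{ℂ[[y]]}(log h)` is free over `ℂ[[y]]`. -/
theorem free_logDer_mul_iff (g : MvPowerSeries (Fin n) ℂ) (h : MvPowerSeries (Fin m) ℂ)
    (hg : Squarefree g) (hh : Squarefree h) :
    Module.Free (MvPowerSeries (Fin n ⊕ Fin m) ℂ) ↥(logDer (extX g * extY h)) ↔
      Module.Free (MvPowerSeries (Fin n) ℂ) ↥(logDer g)
        ∧ Module.Free (MvPowerSeries (Fin m) ℂ) ↥(logDer h) := by
  classical
  have hg0 : g ≠ 0 := by
    intro h0
    have := hg 0 (by rw [h0]; exact dvd_zero _)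
    exact not_isUnit_zero this
  have hh0 : h ≠ 0 := by
    intro h0
    have := hh 0 (by rw [h0]; exact dvd_zero _)
    exact not_isUnit_zero this
  have hX : extX g = eL (β := Fin m) g := rfl
  have hY : extY h = eR (α := Fin n) h := rfl
  rw [hX, hY, free_logDer_iff_free_solMod, free_solMod_mul_iff hg0 hh0,
    ← free_logDer_iff_free_solMod, ← free_logDer_iff_free_solMod]

end Stmt8
end

section
/- Additivity of Hilbert–Samuel polynomials for splayed divisors: let $\mathcal{O} = \mathbb{C}[[x_1,\dots,x_n]]$ with maximal ideal $\mathfrak{m}$, let $1 \le k \le n-1$, and let $g \in \mathbb{C}[[x_1,\dots,x_k]] \subseteq \mathcal{O}$ and $h \in \mathbb{C}[[x_{k+1},\dots,x_n]] \subseteq \mathcal{O}$ be reduced nonunits, both nonzero. Then for all sufficiently large $d$, $\mathrm{length}_{\mathcal{O}}\big(\mathcal{O}/((gh) + \mathfrak{m}^d)\big) + \mathrm{length}_{\mathcal{O}}\big(\mathcal{O}/((g,h) + \mathfrak{m}^d)\big) = \mathrm{length}_{\mathcal{O}}\big(\mathcal{O}/((g) + \mathfrak{m}^d)\big) + \mathrm{length}_{\mathcal{O}}\big(\mathcal{O}/((h)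 + \mathfrak{m}^d)\big)$; that is, the Hilbert–Samuel polynomials satisfy $\chi_{\mathcal{O}/(gh)} + \chi_{\mathcal{O}/(g,h)} = \chi_{\mathcal{O}/(g)} + \chi_{\mathcal{O}/(h)}$. -/
set_option maxHeartbeats 1000000
set_option synthInstance.maxHeartbeats 400000
set_option linter.unusedSectionVars false

open MvPowerSeries Finset

/-- The length of a module: the supremum of the lengths of chains of submodules. -/
noncomputable def moduleLength (R M : Type*) [Ring R] [AddCommGroup M] [Module R M] :
    WithBot ℕ∞ :=
  Order.krullDim (Submodule R M)

/-- The maximal ideal `(x₁, …, xₙ)` of `ℂ[[x₁,…,xₙ]]`. -/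
noncomputable def mxIdeal (n : ℕ) : Ideal (MvPowerSeries (Fin n) ℂ) :=
  Ideal.span (Set.range (MvPowerSeries.X : Fin n → MvPowerSeries (Fin n) ℂ))

namespace HSAux

variable {n : ℕ}

local notation "𝒪" => MvPowerSeries (Fin n) ℂ

/-- all coefficients of degree `< d` vanish -/
def lowVan (d : ℕ) (f : 𝒪) : Prop :=
  ∀ e : Fin n →₀ ℕ, e.degree < d → MvPowerSeries.coeff e f = 0

lemma degree_add (e f : Fin n →₀ ℕ) : (e + f).degree = e.degree + f.degree := by
  simp [Finsupp.degree_eq_weight_one, map_add]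

lemma lowVan_mono {a b : ℕ} (h : b ≤ a) {f : 𝒪} (hf : lowVan a f) : lowVan b f :=
  fun e he => hf e (lt_of_lt_of_le he h)

lemma lowVan_zero (d : ℕ) : lowVan d (0 : 𝒪) := by intro e _; simp

lemma lowVan_sub {d : ℕ} {f g : 𝒪} (hf : lowVan d f) (hg : lowVan d g) : lowVan d (f - g) := by
  intro e he; rw [map_sub, hf e he, hg e he, sub_zero]

lemma lowVan_mul {a b : ℕ} {f g : 𝒪} (hf : lowVan a f) (hg : lowVan b g) :
    lowVan (a + b) (f * g) := by
  intro e he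
  rw [MvPowerSeries.coeff_mul]
  apply Finset.sum_eq_zero
  rintro ⟨u, v⟩ huv
  dsimp only
  rw [Finset.HasAntidiagonal.mem_antidiagonal] at huv
  have hdeg : u.degree + v.degree < a + b := by rw [← degree_add, huv]; exact he
  rcases lt_or_ge u.degree a with h1 | h1
  · rw [hf u h1, zero_mul]
  · rw [hg v (by omega), mul_zero]

/-- homogeneous part of degree `d` -/
noncomputable def hpart (d : ℕ) (f : 𝒪) : 𝒪 :=
  fun e => if e.degree = d then MvPowerSeries.coeff e f else 0

lemma coeff_hpart (d : ℕ) (f : 𝒪) (e : Fin n →₀ ℕ) :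
    MvPowerSeries.coeff e (hpart d f) =
      if e.degree = d then MvPowerSeries.coeff e f else 0 := rfl

lemma hpart_support {d : ℕ} {f : 𝒪} {e : Fin n →₀ ℕ} (h : e.degree ≠ d) :
    MvPowerSeries.coeff e (hpart d f) = 0 := by rw [coeff_hpart, if_neg h]

lemma coeff_hpart_of_eq {d : ℕ} {f : 𝒪} {e : Fin n →₀ ℕ} (h : e.degree = d) :
    MvPowerSeries.coeff e (hpart d f) = MvPowerSeries.coeff e f := by
  rw [coeff_hpart, if_pos h]

/-- key coefficient comparison at the critical degree -/
lemma coeff_mul_eq_hpart_mul {a b : ℕ} {f g : 𝒪} (hf : lowVan a f) (hg : lowVan b g)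
    {e : Fin n →₀ ℕ} (he : e.degree = a + b) :
    MvPowerSeries.coeff e (f * g) =
      MvPowerSeries.coeff e (hpart a f * hpart b g) := by
  rw [MvPowerSeries.coeff_mul, MvPowerSeries.coeff_mul]
  apply Finset.sum_congr rfl
  rintro ⟨u, v⟩ huv
  dsimp only
  rw [Finset.HasAntidiagonal.mem_antidiagonal] at huv
  have hdeg : u.degree + v.degree = a + b := by rw [← degree_add, huv, he]
  rcases lt_trichotomy u.degree a with h1 | h1 | h1
  · rw [hf u h1, hpart_support (by omega), zero_mul, zero_mul]
  · have h2 : v.degree = b := by omega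
    rw [coeff_hpart_of_eq h1, coeff_hpart_of_eq h2]
  · have h2 : v.degree < b := by omega
    rw [hg v h2, hpart_support (f := g) (by omega), mul_zero, mul_zero]

/-- product of homogeneous-supported series is supported in the sum degree -/
lemma mul_support_degree {a b : ℕ} {f g : 𝒪}
    (hf : ∀ e : Fin n →₀ ℕ, e.degree ≠ a → MvPowerSeries.coeff e f = 0)
    (hg : ∀ e : Fin n →₀ ℕ, e.degree ≠ b → MvPowerSeries.coeff e g = 0)
    {e : Fin n →₀ ℕ} (he : e.degree ≠ a + b) :
    MvPowerSeries.coeff e (f * g) = 0 := by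
  rw [MvPowerSeries.coeff_mul]
  apply Finset.sum_eq_zero
  rintro ⟨u, v⟩ huv
  dsimp only
  rw [Finset.HasAntidiagonal.mem_antidiagonal] at huv
  have hdeg : u.degree + v.degree = e.degree := by rw [← degree_add, huv]
  rcases eq_or_ne u.degree a with h1 | h1
  · rw [hg v (by omega), mul_zero]
  · rw [hf u h1, zero_mul]

/-- existence of order data for a nonzero series -/
lemma exists_ord {f : 𝒪} (hf : f ≠ 0) :
    ∃ r : ℕ, lowVan r f ∧ ∃ e : Fin n →₀ ℕ, e.degree = r ∧ MvPowerSeries.coeff e f ≠ 0 := by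
  have hex : ∃ r : ℕ, ∃ e : Fin n →₀ ℕ, e.degree = r ∧ MvPowerSeries.coeff e f ≠ 0 := by
    obtain ⟨e, he⟩ : ∃ e, MvPowerSeries.coeff e f ≠ 0 := by
      by_contra hc
      push_neg at hc
      exact hf (MvPowerSeries.ext fun e => by rw [hc e, map_zero])
    exact ⟨e.degree, e, rfl, he⟩
  classical
  refine ⟨Nat.find hex, ?_, Nat.find_spec hex⟩
  intro e he
  by_contra hc
  exact Nat.find_min hex he ⟨e, rfl, hc⟩

/-- exact multiplicativity of the order (via `NoZeroDivisors`) -/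
lemma exists_coeff_mul_ne_zero {a b : ℕ} {f g : 𝒪} (hf : lowVan a f) (hg : lowVan b g)
    (hfe : ∃ e : Fin n →₀ ℕ, e.degree = a ∧ MvPowerSeries.coeff e f ≠ 0)
    (hge : ∃ e : Fin n →₀ ℕ, e.degree = b ∧ MvPowerSeries.coeff e g ≠ 0) :
    ∃ e : Fin n →₀ ℕ, e.degree = a + b ∧ MvPowerSeries.coeff e (f * g) ≠ 0 := by
  obtain ⟨e1, he1, hc1⟩ := hfe
  obtain ⟨e2, he2, hc2⟩ := hge
  have h1 : hpart a f ≠ 0 := fun h => hc1 (by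
    have := coeff_hpart_of_eq (f := f) he1
    rw [h, map_zero] at this; exact this.symm)
  have h2 : hpart b g ≠ 0 := fun h => hc2 (by
    have := coeff_hpart_of_eq (f := g) he2
    rw [h, map_zero] at this; exact this.symm)
  have h3 : hpart a f * hpart b g ≠ 0 := mul_ne_zero h1 h2
  obtain ⟨e, he⟩ : ∃ e, MvPowerSeries.coeff e (hpart a f * hpart b g) ≠ 0 := by
    by_contra hc
    push_neg at hc
    exact h3 (MvPowerSeries.ext fun e => by rw [hc e, map_zero])
  have hdeg : e.degree = a + b := by
    by_contra hc
    exact he (mul_support_degree (fun e' h => hpart_support h) (fun e' h => hpart_support h) hc)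
  refine ⟨e, hdeg, ?_⟩
  rw [coeff_mul_eq_hpart_mul hf hg hdeg]
  exact he

/-- order cancellation: if `h * u` vanishes below `s + q` and `h` has exact order `s`,
then `u` vanishes below `q`. -/
lemma lowVan_cancel {s q : ℕ} {h u : 𝒪} (hs : lowVan s h)
    (hse : ∃ e : Fin n →₀ ℕ, e.degree = s ∧ MvPowerSeries.coeff e h ≠ 0)
    (hu : lowVan (s + q) (h * u)) : lowVan q u := by
  rcases eq_or_ne u 0 with rfl | hu0
  · exact lowVan_zero q
  obtain ⟨m, hm, hme⟩ := exists_ord hu0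
  rcases le_or_gt q m with hle | hlt
  · exact lowVan_mono hle hm
  · exfalso
    obtain ⟨e, hed, hec⟩ := exists_coeff_mul_ne_zero hs hm hse hme
    exact hec (hu e (by omega))



/-- exponent supported on the variable set `X` -/
def onV (X : Fin n → Prop) (e : Fin n →₀ ℕ) : Prop := ∀ i, ¬ X i → e i = 0

/-- series supported on the variable set `X` -/
def supV (X : Fin n → Prop) (f : 𝒪) : Prop :=
  ∀ e : Fin n →₀ ℕ, ¬ onV X e → MvPowerSeries.coeff e f = 0

lemma onV_mono {X : Fin n → Prop} {e f : Fin n →₀ ℕ} (h : e ≤ f) (hf : onV X f) : onV X e := by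
  intro i hi
  have h1 := (Finsupp.le_def.mp h) i
  have h2 := hf i hi
  omega

lemma onV_add {X : Fin n → Prop} {e f : Fin n →₀ ℕ} (he : onV X e) (hf : onV X f) :
    onV X (e + f) := by
  intro i hi
  simp [he i hi, hf i hi]

lemma toLex_add' (u v : Fin n →₀ ℕ) :
    toLex (u + v) = toLex u + toLex v := rfl

example (a b c d : Lex (Fin n →₀ ℕ)) (h : a + b = c + d) (h2 : c < a) : b < d := by
  by_contra hc
  push_neg at hc
  have := add_lt_add_of_lt_of_le h2 hc
  rw [h] at this
  exact lt_irrefl _ this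

lemma lex_lt_of_add_eq {u v a b : Fin n →₀ ℕ} (h : u + v = a + b)
    (h2 : toLex a < toLex u) : toLex v < toLex b := by
  by_contra hc
  push_neg at hc
  have h3 : toLex a + toLex b < toLex u + toLex v := add_lt_add_of_lt_of_le h2 hc
  rw [← toLex_add', ← toLex_add', h] at h3
  exact lt_irrefl _ h3

lemma supV_mul {X : Fin n → Prop} {f g : 𝒪} (hf : supV X f) (hg : supV X g) :
    supV X (f * g) := by
  intro e he
  rw [MvPowerSeries.coeff_mul]
  apply Finset.sum_eq_zero
  rintro ⟨u, v⟩ huv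
  dsimp only
  rw [Finset.HasAntidiagonal.mem_antidiagonal] at huv
  by_cases hu : onV X u
  · by_cases hv : onV X v
    · exact absurd (huv ▸ onV_add hu hv) he
    · rw [hg v hv, mul_zero]
  · rw [hf u hu, zero_mul]

lemma supV_sub {X : Fin n → Prop} {f g : 𝒪} (hf : supV X f) (hg : supV X g) :
    supV X (f - g) := by
  intro e he; rw [map_sub, hf e he, hg e he, sub_zero]

lemma supV_smul {X : Fin n → Prop} (c : ℂ) {f : 𝒪} (hf : supV X f) : supV X (c • f) := by
  intro e he; rw [map_smul, hf e he, smul_zero]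

lemma supV_sum {X : Fin n → Prop} {ι : Type*} (s : Finset ι) (f : ι → 𝒪)
    (hf : ∀ i ∈ s, supV X (f i)) : supV X (∑ i ∈ s, f i) := by
  intro e he
  rw [map_sum]
  exact Finset.sum_eq_zero fun i hi => hf i hi e he

lemma supV_zero {X : Fin n → Prop} : supV X (0 : 𝒪) := by intro e _; simp

/-- the key slice-multiplication identity -/
lemma coeff_mul_of_split {X : Fin n → Prop} {P T : 𝒪} (hP : supV X P)
    {α β : Fin n →₀ ℕ} (hα : onV X α) (hβ : onV (fun i => ¬ X i) β) :
    MvPowerSeries.coeff (α + β) (P * T)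
      = ∑ p ∈ Finset.HasAntidiagonal.antidiagonal α,
          MvPowerSeries.coeff p.1 P * MvPowerSeries.coeff (p.2 + β) T := by
  classical
  rw [MvPowerSeries.coeff_mul]
  rw [← Finset.sum_filter_of_ne (p := fun p : (Fin n →₀ ℕ) × (Fin n →₀ ℕ) => onV X p.1)
    (fun p _ hp => by
      by_contra hc
      exact hp (by rw [hP p.1 hc, zero_mul]))]
  rw [← Finset.sum_filter_of_ne (p := fun p : (Fin n →₀ ℕ) × (Fin n →₀ ℕ) => onV X p.1)
    (s := Finset.HasAntidiagonal.antidiagonal α)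
    (fun p _ hp => by
      by_contra hc
      exact hp (by rw [hP p.1 hc, zero_mul]))]
  refine Finset.sum_nbij' (fun p => (p.1, p.2 - β)) (fun p => (p.1, p.2 + β)) ?_ ?_ ?_ ?_ ?_
  · rintro ⟨u, v⟩ hp
    simp only [Finset.mem_filter, Finset.HasAntidiagonal.mem_antidiagonal] at hp ⊢
    obtain ⟨hsum, hu⟩ := hp
    refine ⟨?_, hu⟩
    have hble : β ≤ v := by
      rw [Finsupp.le_def]
      intro i
      have h1 := DFunLike.congr_fun hsum i
      simp only [Finsupp.add_apply] at h1
      by_cases hxi : X i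
      · have := hβ i (by simpa using hxi); omega
      · have := hu i hxi
        have := hα i hxi
        omega
    ext i
    have h1 := DFunLike.congr_fun hsum i
    have h2 := Finsupp.le_def.mp hble i
    simp only [Finsupp.add_apply, Finsupp.tsub_apply] at h1 ⊢
    by_cases hxi : X i
    · have := hβ i (by simpa using hxi); omega
    · have := hu i hxi
      have := hα i hxi
      omega
  · rintro ⟨u, v⟩ hp
    simp only [Finset.mem_filter, Finset.HasAntidiagonal.mem_antidiagonal] at hp ⊢
    obtain ⟨hsum, hu⟩ := hp
    exact ⟨by rw [← hsum]; abel, hu⟩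
  · rintro ⟨u, v⟩ hp
    simp only [Finset.mem_filter, Finset.HasAntidiagonal.mem_antidiagonal] at hp
    obtain ⟨hsum, hu⟩ := hp
    have hble : β ≤ v := by
      rw [Finsupp.le_def]
      intro i
      have h1 := DFunLike.congr_fun hsum i
      simp only [Finsupp.add_apply] at h1
      by_cases hxi : X i
      · have := hβ i (by simpa using hxi); omega
      · have := hu i hxi
        have := hα i hxi
        omega
    simp [tsub_add_cancel_of_le hble]
  · rintro ⟨u, v⟩ _
    simp
  · rintro ⟨u, v⟩ hp
    simp only [Finset.mem_filter, Finset.HasAntidiagonal.mem_antidiagonal] at hp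
    obtain ⟨hsum, hu⟩ := hp
    have hble : β ≤ v := by
      rw [Finsupp.le_def]
      intro i
      have h1 := DFunLike.congr_fun hsum i
      simp only [Finsupp.add_apply] at h1
      by_cases hxi : X i
      · have := hβ i (by simpa using hxi); omega
      · have := hu i hxi
        have := hα i hxi
        omega
    dsimp only
    rw [tsub_add_cancel_of_le hble]

open Classical in
noncomputable def sl (X : Fin n → Prop) (α : Fin n →₀ ℕ) (B : 𝒪) : 𝒪 :=
  fun β => if onV (fun i => ¬ X i) β then MvPowerSeries.coeff (α + β) B else 0

open Classical in
private lemma coeff_sl' (X : Fin n → Prop) (α : Fin n →₀ ℕ) (B : 𝒪) (β : Fin n →₀ ℕ) :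
    MvPowerSeries.coeff β (sl X α B)
      = if onV (fun i => ¬ X i) β then MvPowerSeries.coeff (α + β) B else 0 := rfl

lemma coeff_sl_of {X : Fin n → Prop} {α : Fin n →₀ ℕ} (B : 𝒪) {β : Fin n →₀ ℕ}
    (hβ : onV (fun i => ¬ X i) β) :
    MvPowerSeries.coeff β (sl X α B) = MvPowerSeries.coeff (α + β) B := by
  rw [coeff_sl', if_pos hβ]

lemma coeff_sl_of_not {X : Fin n → Prop} {α : Fin n →₀ ℕ} (B : 𝒪) {β : Fin n →₀ ℕ}
    (hβ : ¬ onV (fun i => ¬ X i) β) :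
    MvPowerSeries.coeff β (sl X α B) = 0 := by
  rw [coeff_sl', if_neg hβ]

lemma supV_sl {X : Fin n → Prop} (α : Fin n →₀ ℕ) (B : 𝒪) :
    supV (fun i => ¬ X i) (sl X α B) := fun β hβ => coeff_sl_of_not B hβ

lemma coeff_mul_sl {X : Fin n → Prop} {Q B : 𝒪} (hQ : supV (fun i => ¬ X i) Q)
    {α β : Fin n →₀ ℕ} (hα : onV X α) (hβ : onV (fun i => ¬ X i) β) :
    MvPowerSeries.coeff (α + β) (Q * B) = MvPowerSeries.coeff β (Q * sl X α B) := by
  rw [add_comm α β]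
  rw [coeff_mul_of_split hQ hβ (by intro i hi; exact hα i (by tauto))]
  rw [MvPowerSeries.coeff_mul]
  apply Finset.sum_congr rfl
  rintro ⟨u, v⟩ huv
  dsimp only
  rw [Finset.HasAntidiagonal.mem_antidiagonal] at huv
  have hv : onV (fun i => ¬ X i) v := onV_mono (by rw [← huv]; exact le_add_self) hβ
  rw [coeff_sl_of B hv, add_comm v α]

lemma filter_eq_self_of_onV {X : Fin n → Prop} [DecidablePred X] {e : Fin n →₀ ℕ}
    (h : onV X e) : e.filter X = e := by
  ext i
  rw [Finsupp.filter_apply]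
  split_ifs with hi
  · rfl
  · exact (h i hi).symm

lemma filter_eq_zero_of_onV {X : Fin n → Prop} [DecidablePred X] {e : Fin n →₀ ℕ}
    (h : onV (fun i => ¬ X i) e) : e.filter X = 0 := by
  ext i
  rw [Finsupp.filter_apply]
  split_ifs with hi
  · exact h i (not_not.mpr hi)
  · rfl

lemma onV_filter_pos (X : Fin n → Prop) [DecidablePred X] (e : Fin n →₀ ℕ) :
    onV X (e.filter X) := by
  intro i hi
  rw [Finsupp.filter_apply, if_neg hi]

lemma onV_filter_neg (X : Fin n → Prop) [DecidablePred X] (e : Fin n →₀ ℕ) :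
    onV (fun i => ¬ X i) (e.filter (fun i => ¬ X i)) := by
  intro i hi
  rw [Finsupp.filter_apply, if_neg hi]

/-- The division lemma: if `P * T = Q * B` with `P ≠ 0` supported on the variables `X`
and `Q` supported on the complementary variables, then `Q` divides `T`. -/
lemma div_of_split {X : Fin n → Prop} {P T Q B : 𝒪}
    (hP : supV X P) (hQ : supV (fun i => ¬ X i) Q) (hP0 : P ≠ 0)
    (hPT : P * T = Q * B) : ∃ W : 𝒪, T = Q * W := by
  classical
  -- minimal lex exponent of P
  have hSne : Set.Nonempty {a : Lex (Fin n →₀ ℕ) | MvPowerSeries.coeff (ofLex a) P ≠ 0} := by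
    by_contra hc
    rw [Set.not_nonempty_iff_eq_empty] at hc
    apply hP0
    apply MvPowerSeries.ext; intro e
    rw [map_zero]
    by_contra h
    have : (toLex e) ∈ {a : Lex (Fin n →₀ ℕ) | MvPowerSeries.coeff (ofLex a) P ≠ 0} := h
    rw [hc] at this
    exact this
  obtain ⟨a₀, ha₀, hmin⟩ := wellFounded_lt.has_min _ hSne
  set α₀ : Fin n →₀ ℕ := ofLex a₀ with hα₀def
  have hc0 : MvPowerSeries.coeff α₀ P ≠ 0 := ha₀
  have hα₀X : onV X α₀ := by
    by_contra hcon
    exact hc0 (hP α₀ hcon)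
  have IND : ∀ a : Lex (Fin n →₀ ℕ), onV X (ofLex a) →
      ∃ w : 𝒪, supV (fun i => ¬ X i) w ∧ sl X (ofLex a) T = Q * w := by
    intro a
    induction a using WellFoundedLT.induction with
    | ind a IH =>
      intro ha
      set α : Fin n →₀ ℕ := ofLex a with hαdef
      have IH2 : ∀ v : Fin n →₀ ℕ, ∃ w : 𝒪, supV (fun i => ¬ X i) w ∧
          (toLex v < a → onV X v → sl X v T = Q * w) := by
        intro v
        by_cases hv : toLex v < a ∧ onV X v
        · obtain ⟨w, h1, h2⟩ := IH (toLex v) hv.1 hv.2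
          exact ⟨w, h1, fun _ _ => h2⟩
        · exact ⟨0, supV_zero, fun h1 h2 => absurd ⟨h1, h2⟩ hv⟩
      choose wfun hwsup hwsl using IH2
      have hα₀α : onV X (α₀ + α) := onV_add hα₀X ha
      have hmem : (α₀, α) ∈ Finset.HasAntidiagonal.antidiagonal (α₀ + α) := by
        rw [Finset.HasAntidiagonal.mem_antidiagonal]
      set s := (Finset.HasAntidiagonal.antidiagonal (α₀ + α)).erase (α₀, α) with hs
      have key : ∀ β : Fin n →₀ ℕ, onV (fun i => ¬ X i) β →
          MvPowerSeries.coeff α₀ P * MvPowerSeries.coeff β (sl X α T)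
            + ∑ p ∈ s, MvPowerSeries.coeff p.1 P * MvPowerSeries.coeff β (Q * wfun p.2)
          = MvPowerSeries.coeff β (Q * sl X (α₀ + α) B) := by
        intro β hβ
        have e1 := coeff_mul_of_split hP hα₀α hβ (T := T)
        have e2 := coeff_mul_sl hQ hα₀α hβ (B := B)
        rw [hPT, e2] at e1
        rw [e1, ← Finset.add_sum_erase _ _ hmem]
        congr 1
        · rw [coeff_sl_of T hβ]
        · apply Finset.sum_congr rfl
          rintro ⟨u, v⟩ huv
          dsimp only
          rcases eq_or_ne (MvPowerSeries.coeff u P) 0 with h0 | h0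
          · rw [h0, zero_mul, zero_mul]
          · have huv' : u + v = α₀ + α :=
              Finset.HasAntidiagonal.mem_antidiagonal.mp (Finset.mem_of_mem_erase huv)
            have hune : (u, v) ≠ (α₀, α) := Finset.ne_of_mem_erase huv
            have hvle : v ≤ α₀ + α := by rw [← huv']; exact le_add_self
            have hvX : onV X v := onV_mono hvle hα₀α
            have hu0 : u ≠ α₀ := by
              intro h
              apply hune
              have hv : v = α := by
                rw [← h] at huv'
                exact add_left_cancel huv'
              rw [h, hv]
            have hle : a₀ ≤ toLex u := not_lt.mp (hmin (toLex u) h0)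
            have hlt : toLex α₀ < toLex u :=
              lt_of_le_of_ne hle (fun h => hu0 (by
                have : (ofLex (toLex α₀) : Fin n →₀ ℕ) = ofLex (toLex u) := by rw [h]
                exact this.symm))
            have hvlt : toLex v < toLex α := lex_lt_of_add_eq huv' hlt
            rw [← hwsl v hvlt hvX, coeff_sl_of T hβ]
      set c := MvPowerSeries.coeff α₀ P with hcdef
      set w := c⁻¹ • (sl X (α₀ + α) B
          - ∑ p ∈ s, MvPowerSeries.coeff p.1 P • wfun p.2) with hwdef
      have hwsup' : supV (fun i => ¬ X i) w := by
        apply supV_smul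
        apply supV_sub (supV_sl _ _)
        apply supV_sum
        intro p _
        exact supV_smul _ (hwsup p.2)
      refine ⟨w, hwsup', ?_⟩
      apply MvPowerSeries.ext
      intro β
      by_cases hβ : onV (fun i => ¬ X i) β
      · have hk := key β hβ
        have expand : MvPowerSeries.coeff β (Q * w)
            = c⁻¹ * (MvPowerSeries.coeff β (Q * sl X (α₀ + α) B)
              - ∑ p ∈ s, MvPowerSeries.coeff p.1 P
                  * MvPowerSeries.coeff β (Q * wfun p.2)) := by
          rw [hwdef, mul_smul_comm, map_smul, mul_sub, map_sub, Finset.mul_sum, map_sum]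
          simp only [mul_smul_comm, map_smul, smul_eq_mul]
        rw [expand, ← hk, add_sub_cancel_right, inv_mul_cancel_left₀ hc0]
      · rw [coeff_sl_of_not T hβ, supV_mul hQ hwsup' β hβ]
  -- globalize
  have hIND2 : ∀ α : Fin n →₀ ℕ, ∃ w : 𝒪, supV (fun i => ¬ X i) w ∧
      (onV X α → sl X α T = Q * w) := by
    intro α
    by_cases hα : onV X α
    · obtain ⟨w, h1, h2⟩ := IND (toLex α) hα
      exact ⟨w, h1, fun _ => h2⟩
    · exact ⟨0, supV_zero, fun h => absurd h hα⟩
  choose Wf hWsup hWsl using hIND2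
  refine ⟨fun e => MvPowerSeries.coeff (Finsupp.filter (fun i => ¬ X i) e)
      (Wf (Finsupp.filter X e)), ?_⟩
  apply MvPowerSeries.ext
  intro e
  set W : 𝒪 := fun e => MvPowerSeries.coeff (Finsupp.filter (fun i => ¬ X i) e)
      (Wf (Finsupp.filter X e)) with hWdef
  set ex := Finsupp.filter X e with hexdef
  set ey := Finsupp.filter (fun i => ¬ X i) e with heydef
  have hsplit : ex + ey = e := Finsupp.filter_pos_add_filter_neg e X
  have hex : onV X ex := onV_filter_pos X e
  have hey : onV (fun i => ¬ X i) ey := onV_filter_neg X e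
  have hslW : sl X ex W = Wf ex := by
    apply MvPowerSeries.ext
    intro β
    by_cases hβ : onV (fun i => ¬ X i) β
    · rw [coeff_sl_of _ hβ]
      have : MvPowerSeries.coeff (ex + β) W
          = MvPowerSeries.coeff (Finsupp.filter (fun i => ¬ X i) (ex + β))
              (Wf (Finsupp.filter X (ex + β))) := rfl
      rw [this]
      have h1 : Finsupp.filter X (ex + β) = ex := by
        rw [Finsupp.filter_add, filter_eq_self_of_onV hex, filter_eq_zero_of_onV hβ, add_zero]
      have h2 : Finsupp.filter (fun i => ¬ X i) (ex + β) = β := by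
        rw [Finsupp.filter_add]
        have hx0 : Finsupp.filter (fun i => ¬ X i) ex = 0 := by
          ext i
          rw [Finsupp.filter_apply]
          by_cases hi : X i
          · rw [if_neg (not_not.mpr hi)]
            rfl
          · rw [if_pos hi, hex i hi]
            rfl
        have hb : Finsupp.filter (fun i => ¬ X i) β = β := filter_eq_self_of_onV hβ
        rw [hx0, hb, zero_add]
      rw [h1, h2]
    · rw [coeff_sl_of_not _ hβ, hWsup ex β hβ]
  rw [← hsplit, ← coeff_sl_of T hey, hWsl ex hex, coeff_mul_sl hQ hex hey, hslW]

lemma lowVan_hpart (d : ℕ) (f : 𝒪) : lowVan d (hpart d f) :=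
  fun _ he => hpart_support (by omega)

lemma hpart_idem (d : ℕ) (f : 𝒪) : hpart d (hpart d f) = hpart d f := by
  apply MvPowerSeries.ext
  intro e
  by_cases hed : e.degree = d
  · rw [coeff_hpart_of_eq hed, coeff_hpart_of_eq hed]
  · rw [hpart_support hed, hpart_support hed]

lemma coeff_mul_hpart_right {a b : ℕ} {f g : 𝒪}
    (hf : ∀ e : Fin n →₀ ℕ, e.degree ≠ a → MvPowerSeries.coeff e f = 0)
    {e : Fin n →₀ ℕ} (he : e.degree = a + b) :
    MvPowerSeries.coeff e (f * hpart b g) = MvPowerSeries.coeff e (f * g) := by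
  rw [MvPowerSeries.coeff_mul, MvPowerSeries.coeff_mul]
  apply Finset.sum_congr rfl
  rintro ⟨u, v⟩ huv
  dsimp only
  rw [Finset.HasAntidiagonal.mem_antidiagonal] at huv
  have hdeg : u.degree + v.degree = a + b := by rw [← degree_add, huv, he]
  by_cases hu : u.degree = a
  · rw [coeff_hpart_of_eq (by omega)]
  · rw [hf u hu, zero_mul, zero_mul]

lemma supV_hpart {X : Fin n → Prop} {f : 𝒪} (hf : supV X f) (d : ℕ) :
    supV X (hpart d f) := by
  intro e he
  by_cases hed : e.degree = d
  · rw [coeff_hpart_of_eq hed]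
    exact hf e he
  · exact hpart_support hed

lemma hpart_ne_zero {d : ℕ} {f : 𝒪} {e : Fin n →₀ ℕ} (hed : e.degree = d)
    (hc : MvPowerSeries.coeff e f ≠ 0) : hpart d f ≠ 0 := by
  intro h0
  apply hc
  have := coeff_hpart_of_eq (f := f) hed
  rw [h0, map_zero] at this
  exact this.symm

/-- The key approximation lemma: if `g · a ∈ (h) + 𝔪^d` then `a ∈ (h) + 𝔪^(d-r)`,
where `r` is the order of `g`; here `g` and `h` depend on complementary sets of variables. -/
lemma key_approx {X : Fin n → Prop} {g h : 𝒪}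
    (hgX : supV X g) (hhY : supV (fun i => ¬ X i) h)
    (hh0 : h ≠ 0)
    {r : ℕ} (hgr : lowVan r g)
    (hgre : ∃ e : Fin n →₀ ℕ, e.degree = r ∧ MvPowerSeries.coeff e g ≠ 0) :
    ∀ d a b, lowVan d (g * a - h * b) → ∃ c : 𝒪, lowVan (d - r) (a - h * c) := by
  obtain ⟨s, hhs, hhse⟩ := exists_ord hh0
  intro d
  induction d with
  | zero =>
    intro a b _
    exact ⟨0, fun e he => absurd he (by omega)⟩
  | succ d IHd =>
    intro a b hab
    rcases le_or_gt (d + 1) r with hle | hlt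
    · exact ⟨0, fun e he => absurd he (by omega)⟩
    obtain ⟨c, hc⟩ := IHd a b (lowVan_mono (Nat.le_succ d) hab)
    set m := d - r with hm
    by_cases ht : ∀ e : Fin n →₀ ℕ, e.degree = m → MvPowerSeries.coeff e (a - h * c) = 0
    · refine ⟨c, ?_⟩
      intro e he
      rcases lt_or_eq_of_le (Nat.lt_succ_iff.mp (by omega : e.degree < m + 1)) with h1 | h1
      · exact hc e (by omega)
      · exact ht e h1
    · push_neg at ht
      obtain ⟨e₀, he₀d, he₀c⟩ := ht
      set t := a - h * c with htdef
      set b' := b - g * c with hb'def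
      set q := g * a - h * b with hqdef
      have hordt : lowVan m t := by rw [htdef]; exact hc
      have hgt : g * t = q + h * b' := by rw [htdef, hb'def, hqdef]; ring
      have hco : ∀ e : Fin n →₀ ℕ, MvPowerSeries.coeff e (g * t)
          = MvPowerSeries.coeff e q + MvPowerSeries.coeff e (h * b') := by
        intro e
        rw [hgt, map_add]
      have hgtlow : lowVan (r + m) (g * t) := lowVan_mul hgr hordt
      have hrm : r + m = d := by omega
      have hgte : ∃ e : Fin n →₀ ℕ, e.degree = r + m
          ∧ MvPowerSeries.coeff e (g * t) ≠ 0 :=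
        exists_coeff_mul_ne_zero hgr hordt hgre ⟨e₀, he₀d, he₀c⟩
      have hhb'low : lowVan d (h * b') := by
        intro e he
        have h1 := hco e
        rw [hgtlow e (by omega), hab e (by omega)] at h1
        simpa using h1.symm
      have hsd : s ≤ d := by
        by_contra hcon
        push_neg at hcon
        obtain ⟨e, hed, hec⟩ := hgte
        apply hec
        have h1 := hco e
        have h2 : lowVan (s + 0) (h * b') :=
          lowVan_mul hhs (fun e' he' => absurd he' (by omega))
        rw [hab e (by omega), h2 e (by omega)] at h1
        simpa using h1
      have hb'low : lowVan (d - s) b' := by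
        apply lowVan_cancel hhs hhse (q := d - s)
        rw [show s + (d - s) = d from by omega]
        exact hhb'low
      have hhom : hpart r g * hpart m t = hpart s h * hpart (d - s) b' := by
        apply MvPowerSeries.ext
        intro e
        by_cases hed : e.degree = d
        · rw [← coeff_mul_eq_hpart_mul hgr hordt (by omega),
            ← coeff_mul_eq_hpart_mul hhs hb'low (by omega)]
          have h1 := hco e
          rw [hab e (by omega)] at h1
          simpa using h1
        · rw [mul_support_degree (fun e' h' => hpart_support h') (fun e' h' => hpart_support h')
            (by omega : e.degree ≠ r + m),
            mul_support_degree (fun e' h' => hpart_support h') (fun e' h' => hpart_support h')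
            (by omega : e.degree ≠ s + (d - s))]
      obtain ⟨w, hw⟩ := div_of_split (supV_hpart hgX r) (supV_hpart hhY s)
        (hpart_ne_zero hgre.choose_spec.1 hgre.choose_spec.2) hhom
      have hsm : s ≤ m := by
        by_contra hcon
        push_neg at hcon
        apply he₀c
        have h1 : MvPowerSeries.coeff e₀ (hpart m t) = MvPowerSeries.coeff e₀ t :=
          coeff_hpart_of_eq he₀d
        rw [← h1, hw]
        have h2 : lowVan (s + 0) (hpart s h * w) :=
          lowVan_mul (lowVan_hpart s h) (fun e' he' => absurd he' (by omega))
        exact h2 e₀ (by omega)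
      set w' := hpart (m - s) w with hw'def
      have hw'low : lowVan (m - s) w' := lowVan_hpart _ _
      have hstep : ∀ e : Fin n →₀ ℕ, e.degree = m →
          MvPowerSeries.coeff e (h * w') = MvPowerSeries.coeff e t := by
        intro e hed
        have hsum : e.degree = s + (m - s) := by omega
        rw [coeff_mul_eq_hpart_mul hhs hw'low hsum, hw'def, hpart_idem,
          coeff_mul_hpart_right (fun e' h' => hpart_support h') hsum, ← hw,
          coeff_hpart_of_eq (by omega : e.degree = m)]
      refine ⟨c + w', ?_⟩
      intro e he
      have hexp : a - h * (c + w') = t - h * w' := by rw [htdef]; ring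
      rw [hexp, map_sub]
      have hdlt : e.degree < m + 1 := by omega
      rcases lt_or_eq_of_le (Nat.lt_succ_iff.mp hdlt) with h1 | h1
      · have h2 : lowVan m (h * w') := by
          have := lowVan_mul hhs hw'low
          rwa [show s + (m - s) = m from by omega] at this
        rw [hordt e h1, h2 e h1, sub_zero]
      · rw [hstep e h1, sub_self]

/-! ### The maximal ideal and its powers -/

noncomputable def mx : Ideal 𝒪 :=
  Ideal.span (Set.range (MvPowerSeries.X : Fin n → 𝒪))

/-- the ideal of series vanishing in degrees `< d` -/
noncomputable def Jideal (d : ℕ) : Ideal 𝒪 where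
  carrier := {f | lowVan d f}
  add_mem' := by
    intro a b ha hb e he
    rw [map_add, ha e he, hb e he, add_zero]
  zero_mem' := lowVan_zero d
  smul_mem' := by
    intro c f hf
    have := lowVan_mul (a := 0) (f := c) (fun e he => absurd he (by omega)) hf
    rw [zero_add] at this
    intro e he
    rw [smul_eq_mul]
    exact this e he

lemma mem_Jideal {d : ℕ} {f : 𝒪} : f ∈ Jideal (n := n) d ↔ lowVan d f := Iff.rfl

lemma degree_single (i : Fin n) : (Finsupp.single i 1).degree = 1 := by
  exact Finsupp.degree_single i 1

lemma mx_le_J1 : mx (n := n) ≤ Jideal 1 := by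
  rw [mx, Ideal.span_le]
  rintro f ⟨i, rfl⟩
  intro e he
  have he0 : e = 0 := by
    rwa [Nat.lt_one_iff, Finsupp.degree_eq_zero_iff] at he
  subst he0
  rw [MvPowerSeries.coeff_zero_eq_constantCoeff]
  exact MvPowerSeries.constantCoeff_X i

lemma pow_mx_le (d : ℕ) : mx (n := n) ^ d ≤ Jideal d := by
  induction d with
  | zero =>
    intro f _
    intro e he
    exact absurd he (by omega)
  | succ d IH =>
    rw [pow_succ]
    refine le_trans (Ideal.mul_mono IH mx_le_J1) ?_
    rw [Ideal.mul_le]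
    intro r hr s hs
    exact lowVan_mul hr hs

lemma supp_add_single_nonempty (e : Fin n →₀ ℕ) (i : Fin n) :
    (e + Finsupp.single i 1).support.Nonempty := by
  refine ⟨i, ?_⟩
  rw [Finsupp.mem_support_iff]
  simp

/-- the `i`-th component in a decomposition of `f` along its minimal variable -/
noncomputable def giComp (f : 𝒪) (i : Fin n) : 𝒪 :=
  fun e => if (e + Finsupp.single i 1).support.min' (supp_add_single_nonempty e i) = i
    then MvPowerSeries.coeff (e + Finsupp.single i 1) f else 0

lemma coeff_giComp (f : 𝒪) (i : Fin n) (e : Fin n →₀ ℕ) :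
    MvPowerSeries.coeff e (giComp f i)
      = if (e + Finsupp.single i 1).support.min' (supp_add_single_nonempty e i) = i
        then MvPowerSeries.coeff (e + Finsupp.single i 1) f else 0 := rfl

lemma lowVan_giComp {d : ℕ} {f : 𝒪} (hf : lowVan (d + 1) f) (i : Fin n) :
    lowVan d (giComp f i) := by
  intro e he
  rw [coeff_giComp]
  split_ifs with h
  · apply hf
    rw [degree_add, degree_single]
    omega
  · rfl

lemma decomp_of_lowVan_one {f : 𝒪} (hf : lowVan 1 f) :
    f = ∑ i : Fin n, MvPowerSeries.X i * giComp f i := by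
  apply MvPowerSeries.ext
  intro e
  rw [map_sum]
  have hcoeff : ∀ i : Fin n, MvPowerSeries.coeff e (MvPowerSeries.X i * giComp f i)
      = if Finsupp.single i 1 ≤ e
        then MvPowerSeries.coeff (e - Finsupp.single i 1) (giComp f i) else 0 := by
    intro i
    rw [MvPowerSeries.X, MvPowerSeries.coeff_monomial_mul]
    split_ifs with h
    · rw [one_mul]
    · rfl
  rcases eq_or_ne e 0 with rfl | hne
  · rw [hf 0 (by simp [map_zero])]
    symm
    apply Finset.sum_eq_zero
    intro i _
    rw [hcoeff i, if_neg]
    intro hle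
    have := Finsupp.le_def.mp hle i
    simp at this
  · have hsupp : e.support.Nonempty := Finsupp.support_nonempty_iff.mpr hne
    set i₀ := e.support.min' hsupp with hi₀
    have hi₀mem : i₀ ∈ e.support := Finset.min'_mem _ _
    have hi₀pos : 1 ≤ e i₀ := by
      rw [Finsupp.mem_support_iff] at hi₀mem
      omega
    rw [Finset.sum_eq_single i₀]
    · rw [hcoeff i₀, if_pos (by
        rw [Finsupp.single_le_iff]; exact hi₀pos)]
      have hre : e - Finsupp.single i₀ 1 + Finsupp.single i₀ 1 = e :=
        tsub_add_cancel_of_le (Finsupp.single_le_iff.mpr hi₀pos)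
      rw [coeff_giComp]
      simp only [hre]
      simp
      intro hc; exact absurd hi₀.symm hc
    · intro i _ hi
      rw [hcoeff i]
      split_ifs with hle
      · rw [coeff_giComp]
        have hre : e - Finsupp.single i 1 + Finsupp.single i 1 = e :=
          tsub_add_cancel_of_le hle
        simp only [hre]
        rw [if_neg]
        intro hcond
        apply hi
        rw [← hcond]
      · rfl
    · intro h
      exact absurd (Finset.mem_univ i₀) h

lemma lowVan_mem_pow_mx {d : ℕ} {f : 𝒪} (hf : lowVan d f) : f ∈ mx (n := n) ^ d := by
  induction d generalizing f with
  | zero => simp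
  | succ d IH =>
    rw [decomp_of_lowVan_one (lowVan_mono (by omega) hf)]
    apply Ideal.sum_mem
    intro i _
    rw [pow_succ, mul_comm (MvPowerSeries.X i)]
    exact Ideal.mul_mem_mul (IH (lowVan_giComp hf i)) (Ideal.subset_span ⟨i, rfl⟩)

theorem mem_pow_mx_iff {d : ℕ} {f : 𝒪} : f ∈ mx (n := n) ^ d ↔ lowVan d f :=
  ⟨fun h => pow_mx_le d h, lowVan_mem_pow_mx⟩

/-! ### Module length as ℂ-dimension -/

section Length

variable {M : Type*} [AddCommGroup M]

lemma ltseries_length_le [Module 𝒪 M] [Module ℂ M] [IsScalarTower ℂ 𝒪 M] [FiniteDimensional ℂ M] (p : LTSeries (Submodule 𝒪 M)) :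
    p.length ≤ Module.finrank ℂ M := by
  have hmono : ∀ i j : Fin (p.length + 1), i < j →
      (p i).restrictScalars ℂ < (p j).restrictScalars ℂ := by
    intro i j hij
    have h1 := p.strictMono hij
    refine lt_of_le_of_ne (fun x hx => (le_of_lt h1) hx) ?_
    intro heq
    exact (ne_of_lt h1) (Submodule.restrictScalars_injective ℂ _ _ heq)
  have hstep : ∀ k : ℕ, ∀ hk : k ≤ p.length,
      k ≤ Module.finrank ℂ ((p ⟨k, by omega⟩).restrictScalars ℂ) := by
    intro k
    induction k with
    | zero => intro _; exact Nat.zero_le _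
    | succ k IH =>
      intro hk
      have h1 := IH (by omega)
      have h2 : (p ⟨k, by omega⟩).restrictScalars ℂ < (p ⟨k + 1, by omega⟩).restrictScalars ℂ :=
        hmono _ _ (by simp [Fin.lt_def])
      have h3 := Submodule.finrank_lt_finrank_of_lt h2
      omega
  have h4 := hstep p.length le_rfl
  have h5 : Module.finrank ℂ ((p ⟨p.length, by omega⟩).restrictScalars ℂ)
      ≤ Module.finrank ℂ M := Submodule.finrank_le _
  omega

lemma sub_C_constantCoeff_mem_mx (c : 𝒪) :
    c - (algebraMap ℂ 𝒪) (MvPowerSeries.constantCoeff c) ∈ mx (n := n) := by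
  rw [← pow_one (mx (n := n))]
  rw [mem_pow_mx_iff]
  intro e he
  have he0 : e = 0 := by rwa [Nat.lt_one_iff, Finsupp.degree_eq_zero_iff] at he
  subst he0
  rw [map_sub, MvPowerSeries.coeff_zero_eq_constantCoeff]
  simp [MvPowerSeries.algebraMap_apply]

lemma exists_chain_of_smul_le [Module 𝒪 M] [Module ℂ M] [IsScalarTower ℂ 𝒪 M] [FiniteDimensional ℂ M] (N₂ : Submodule 𝒪 M) :
    ∀ (r : ℕ) (N₁ : Submodule 𝒪 M), N₁ ≤ N₂ → mx (n := n) • N₂ ≤ N₁ →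
      Module.finrank ℂ (N₂.restrictScalars ℂ) = Module.finrank ℂ (N₁.restrictScalars ℂ) + r →
      ∃ p : LTSeries (Submodule 𝒪 M), p.head = N₁ ∧ p.last = N₂ ∧ p.length = r := by
  intro r
  induction r with
  | zero =>
    intro N₁ h12 _ hr
    have heq : N₁ = N₂ := by
      apply Submodule.restrictScalars_injective ℂ
      apply Submodule.eq_of_le_of_finrank_eq (fun x hx => h12 hx)
      omega
    subst heq
    exact ⟨RelSeries.singleton _ N₁, rfl, rfl, rfl⟩
  | succ r IH =>
    intro N₁ h12 hsm hr
    have hne : N₁ ≠ N₂ := by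
      intro h; rw [h] at hr; omega
    have hlt : N₁ < N₂ := lt_of_le_of_ne h12 hne
    obtain ⟨x, hxN₂, hxN₁⟩ := SetLike.exists_of_lt hlt
    set N' := N₁ ⊔ Submodule.span 𝒪 {x} with hN'
    have hxN' : x ∈ N' :=
      Submodule.mem_sup_right (Submodule.mem_span_singleton_self x)
    have hN'le : N' ≤ N₂ := by
      rw [hN']
      apply sup_le h12
      rw [Submodule.span_le, Set.singleton_subset_iff]
      exact hxN₂
    have hrS : N'.restrictScalars ℂ = N₁.restrictScalars ℂ ⊔ (ℂ ∙ x) := by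
      apply le_antisymm
      · intro y hy
        have hy' : y ∈ N₁ ⊔ Submodule.span 𝒪 {x} := hy
        obtain ⟨a, ha, b, hb, rfl⟩ := Submodule.mem_sup.mp hy'
        obtain ⟨c, rfl⟩ := Submodule.mem_span_singleton.mp hb
        set c₀ := MvPowerSeries.constantCoeff c with hc₀
        have hdecomp : c • x = (c - algebraMap ℂ 𝒪 c₀) • x + c₀ • x := by
          rw [sub_smul, algebraMap_smul, sub_add_cancel]
        have h1 : (c - algebraMap ℂ 𝒪 c₀) • x ∈ N₁ :=
          hsm (Submodule.smul_mem_smul (sub_C_constantCoeff_mem_mx c) hxN₂)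
        rw [hdecomp, ← add_assoc]
        apply Submodule.add_mem
        · exact Submodule.mem_sup_left (Submodule.add_mem _ ha h1)
        · exact Submodule.mem_sup_right (Submodule.smul_mem _ c₀
            (Submodule.mem_span_singleton_self x))
      · apply sup_le
        · exact fun y hy => by rw [Submodule.restrictScalars_mem]; exact Submodule.mem_sup_left hy
        · rw [Submodule.span_le, Set.singleton_subset_iff]
          exact hxN'
    have hx0 : x ≠ 0 := fun h => hxN₁ (h ▸ N₁.zero_mem)
    have hxrk : Module.finrank ℂ (N'.restrictScalars ℂ)
        = Module.finrank ℂ (N₁.restrictScalars ℂ) + 1 := by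
      rw [hrS]
      have hinf : (N₁.restrictScalars ℂ) ⊓ (ℂ ∙ x) = ⊥ := by
        rw [eq_bot_iff]
        rintro y ⟨hy1, hy2⟩
        obtain ⟨c, rfl⟩ := Submodule.mem_span_singleton.mp hy2
        rcases eq_or_ne c 0 with rfl | hc
        · simp
        · exfalso
          apply hxN₁
          have h2 : c⁻¹ • (c • x) ∈ N₁.restrictScalars ℂ :=
            Submodule.smul_mem _ _ hy1
          rwa [smul_smul, inv_mul_cancel₀ hc, one_smul] at h2
      have heq := Submodule.finrank_sup_add_finrank_inf_eq
        (N₁.restrictScalars ℂ) (ℂ ∙ x)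
      rw [hinf, finrank_span_singleton hx0] at heq
      simp only [finrank_bot, add_zero] at heq
      omega
    obtain ⟨p, hph, hpl, hplen⟩ := IH N' hN'le (le_trans hsm le_sup_left) (by omega)
    have hN₁N' : N₁ < N' := by
      apply lt_of_le_of_ne le_sup_left
      intro h
      exact hxN₁ (h ▸ hxN')
    refine ⟨p.cons N₁ (by rw [hph]; exact hN₁N'), ?_, ?_, ?_⟩
    · rw [RelSeries.head_cons]
    · rw [RelSeries.last_cons, hpl]
    · rw [RelSeries.cons_length, hplen]

lemma exists_full_chain [Module 𝒪 M] [Module ℂ M] [IsScalarTower ℂ 𝒪 M] [FiniteDimensional ℂ M] :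
    ∀ (d : ℕ) (N : Submodule 𝒪 M), mx (n := n) ^ d • N = ⊥ →
      ∃ p : LTSeries (Submodule 𝒪 M), p.head = ⊥ ∧ p.last = N ∧
        p.length = Module.finrank ℂ (N.restrictScalars ℂ) := by
  intro d
  induction d with
  | zero =>
    intro N hN
    rw [pow_zero, Ideal.one_eq_top, Submodule.top_smul] at hN
    subst hN
    refine ⟨RelSeries.singleton _ ⊥, rfl, rfl, ?_⟩
    have : (⊥ : Submodule 𝒪 M).restrictScalars ℂ = ⊥ := by
      ext y
      simp [Submodule.restrictScalars_mem]
    rw [this, finrank_bot]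
    rfl
  | succ d IH =>
    intro N hN
    set K := mx (n := n) • N with hK
    have hKb : mx (n := n) ^ d • K = ⊥ := by
      rw [hK, ← Submodule.smul_assoc, smul_eq_mul, ← pow_succ]
      exact hN
    obtain ⟨p1, h1h, h1l, h1len⟩ := IH K hKb
    have hKN : K ≤ N := Submodule.smul_le_right
    have hrle : Module.finrank ℂ (K.restrictScalars ℂ)
        ≤ Module.finrank ℂ (N.restrictScalars ℂ) :=
      Submodule.finrank_mono (fun x hx => hKN hx)
    obtain ⟨p2, h2h, h2l, h2len⟩ := exists_chain_of_smul_le N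
      (Module.finrank ℂ (N.restrictScalars ℂ) - Module.finrank ℂ (K.restrictScalars ℂ))
      K hKN le_rfl (by omega)
    refine ⟨p1.smash p2 (by rw [h1l, h2h]), ?_, ?_, ?_⟩
    · rw [RelSeries.head_smash, h1h]
    · rw [RelSeries.last_smash, h2l]
    · rw [RelSeries.smash_length, h1len, h2len]
      omega

lemma krullDim_submodule_eq [Module 𝒪 M] [Module ℂ M] [IsScalarTower ℂ 𝒪 M] [FiniteDimensional ℂ M] (d : ℕ)
    (hd : mx (n := n) ^ d • (⊤ : Submodule 𝒪 M) = ⊥) :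
    Order.krullDim (Submodule 𝒪 M) = (Module.finrank ℂ M : WithBot ℕ∞) := by
  have hrtop : (⊤ : Submodule 𝒪 M).restrictScalars ℂ = ⊤ := by
    ext y; simp [Submodule.restrictScalars_mem]
  apply le_antisymm
  · rw [Order.krullDim_eq_iSup_length]
    have hle : (⨆ p : LTSeries (Submodule 𝒪 M), (p.length : ℕ∞))
        ≤ (Module.finrank ℂ M : ℕ∞) :=
      iSup_le fun p => by exact_mod_cast ltseries_length_le p
    exact_mod_cast hle
  · obtain ⟨p, _, _, hlen⟩ := exists_full_chain d ⊤ hd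
    have hle := Order.LTSeries.length_le_krullDim p
    rw [hlen, hrtop] at hle
    rw [finrank_top] at hle
    exact_mod_cast hle

end Length

/-! ### Quotients by cofinite ideals -/

lemma finite_quotient {d : ℕ} {I : Ideal 𝒪} (hIe : mx (n := n) ^ d ≤ I) :
    Module.Finite ℂ (𝒪 ⧸ I) := by
  classical
  rw [Module.finite_def]
  set Ed : Finset (Fin n →₀ ℕ) := (Finsupp.finite_of_degree_le (σ := Fin n) d).toFinset
    with hEd
  refine ⟨Ed.image fun e => Ideal.Quotient.mk I ((MvPowerSeries.monomial e) 1), ?_⟩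
  rw [eq_top_iff]
  rintro x -
  obtain ⟨f, rfl⟩ := Ideal.Quotient.mk_surjective x
  set φ : 𝒪 →ₗ[ℂ] 𝒪 ⧸ I := (Ideal.Quotient.mkₐ ℂ I).toLinearMap with hφ
  have hdiff : f - ∑ e ∈ Ed, MvPowerSeries.coeff e f • (MvPowerSeries.monomial e) 1
      ∈ I := by
    apply hIe
    rw [mem_pow_mx_iff]
    intro e' he'
    rw [map_sub, map_sum]
    have hsum : (∑ e ∈ Ed, MvPowerSeries.coeff e'
        ((MvPowerSeries.coeff e f) • (MvPowerSeries.monomial e) 1))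
        = MvPowerSeries.coeff e' f := by
      rw [Finset.sum_eq_single e']
      · rw [map_smul, MvPowerSeries.coeff_monomial, if_pos rfl, smul_eq_mul, mul_one]
      · intro e _ hne
        rw [map_smul, MvPowerSeries.coeff_monomial, if_neg (fun h => hne h.symm), smul_zero]
      · intro hmem
        exfalso
        apply hmem
        rw [hEd, Set.Finite.mem_toFinset]
        exact le_of_lt he'
    rw [hsum, sub_self]
  have h0 : φ (f - ∑ e ∈ Ed, MvPowerSeries.coeff e f • (MvPowerSeries.monomial e) 1)
      = 0 := by
    show Ideal.Quotient.mk I _ = 0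
    exact Ideal.Quotient.eq_zero_iff_mem.mpr hdiff
  rw [map_sub, map_sum] at h0
  simp only [map_smul] at h0
  have hrepr : φ f = ∑ e ∈ Ed, MvPowerSeries.coeff e f • φ ((MvPowerSeries.monomial e) 1) :=
    sub_eq_zero.mp h0
  show φ f ∈ _
  rw [hrepr]
  apply Submodule.sum_mem
  intro e he
  apply Submodule.smul_mem
  apply Submodule.subset_span
  exact Finset.mem_coe.mpr (Finset.mem_image_of_mem _ he)

lemma smul_top_eq_bot {d : ℕ} {I : Ideal 𝒪} (hIe : mx (n := n) ^ d ≤ I) :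
    mx (n := n) ^ d • (⊤ : Submodule 𝒪 (𝒪 ⧸ I)) = ⊥ := by
  rw [eq_bot_iff, Submodule.smul_le]
  intro r hr x _
  obtain ⟨y, rfl⟩ := Ideal.Quotient.mk_surjective x
  rw [Submodule.mem_bot]
  have h1 : r • (Ideal.Quotient.mk I y) = Ideal.Quotient.mk I (r * y) := by
    rw [← smul_eq_mul]
    rfl
  rw [h1, Ideal.Quotient.eq_zero_iff_mem]
  exact hIe (Ideal.mul_mem_right y _ hr)

lemma krullDim_quotient {d : ℕ} {I : Ideal 𝒪} (hIe : mx (n := n) ^ d ≤ I) :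
    Order.krullDim (Submodule 𝒪 (𝒪 ⧸ I)) = (Module.finrank ℂ (𝒪 ⧸ I) : WithBot ℕ∞) := by
  have := finite_quotient hIe
  exact krullDim_submodule_eq d (smul_top_eq_bot hIe)

/-! ### Dimension bookkeeping -/

lemma finrank_quotient_add {d : ℕ} {I J : Ideal 𝒪} (hI : I = mx (n := n) ^ d) (hIJ : I ≤ J) :
    Module.finrank ℂ (𝒪 ⧸ J)
      + Module.finrank ℂ ((Submodule.map (Submodule.mkQ (I : Submodule 𝒪 𝒪))
          (J : Submodule 𝒪 𝒪)).restrictScalars ℂ)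
      = Module.finrank ℂ (𝒪 ⧸ I) := by
  have hfin : Module.Finite ℂ (𝒪 ⧸ I) := finite_quotient (n := n) (d := d) (by rw [hI])
  set N := Submodule.map (Submodule.mkQ (I : Submodule 𝒪 𝒪)) (J : Submodule 𝒪 𝒪) with hN
  have e1 : ((𝒪 ⧸ I) ⧸ N) ≃ₗ[𝒪] (𝒪 ⧸ J) :=
    Submodule.quotientQuotientEquivQuotient _ _ hIJ
  have e1c : ((𝒪 ⧸ I) ⧸ N) ≃ₗ[ℂ] (𝒪 ⧸ J) := e1.restrictScalars ℂ
  have e2 : ((𝒪 ⧸ I) ⧸ N.restrictScalars ℂ) ≃ₗ[ℂ] ((𝒪 ⧸ I) ⧸ N) :=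
    Submodule.Quotient.restrictScalarsEquiv ℂ N
  have h3 := Submodule.finrank_quotient_add_finrank (N.restrictScalars ℂ)
  rw [← e1c.finrank_eq, ← e2.finrank_eq] at *
  exact h3

lemma map_mkQ_sup {I J K : Ideal 𝒪} :
    Submodule.map (Submodule.mkQ (I : Submodule 𝒪 𝒪)) ((J ⊔ K : Ideal 𝒪) : Submodule 𝒪 𝒪)
      = Submodule.map (Submodule.mkQ _) (J : Submodule 𝒪 𝒪)
        ⊔ Submodule.map (Submodule.mkQ _) (K : Submodule 𝒪 𝒪) :=
  Submodule.map_sup _ _ _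

lemma map_mkQ_inf {I J K : Ideal 𝒪} (hIJ : I ≤ J) (hIK : I ≤ K) :
    Submodule.map (Submodule.mkQ (I : Submodule 𝒪 𝒪)) ((J ⊓ K : Ideal 𝒪) : Submodule 𝒪 𝒪)
      = Submodule.map (Submodule.mkQ _) (J : Submodule 𝒪 𝒪)
        ⊓ Submodule.map (Submodule.mkQ _) (K : Submodule 𝒪 𝒪) := by
  apply le_antisymm
  · apply le_inf
    · exact Submodule.map_mono inf_le_left
    · exact Submodule.map_mono inf_le_right
  · rintro x ⟨hx1, hx2⟩
    obtain ⟨a, haJ, ha⟩ := hx1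
    obtain ⟨b, hbK, hb⟩ := hx2
    have hab : a - b ∈ I := by
      rw [← Submodule.ker_mkQ (I : Submodule 𝒪 𝒪), LinearMap.mem_ker, map_sub, ha, hb, sub_self]
    have haK : a ∈ K := by
      have : a = b + (a - b) := by ring
      rw [this]
      exact Submodule.add_mem _ hbK (hIK hab)
    exact ⟨a, ⟨haJ, haK⟩, ha⟩

lemma restrictScalars_sup {Q : Type*} [AddCommGroup Q] [Module 𝒪 Q] [Module ℂ Q]
    [IsScalarTower ℂ 𝒪 Q] (p q : Submodule 𝒪 Q) :
    (p ⊔ q).restrictScalars ℂ = p.restrictScalars ℂ ⊔ q.restrictScalars ℂ := by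
  apply le_antisymm
  · intro x hx
    have hx' : x ∈ p ⊔ q := hx
    obtain ⟨a, ha, b, hb, rfl⟩ := Submodule.mem_sup.mp hx'
    exact Submodule.add_mem _ (Submodule.mem_sup_left ha) (Submodule.mem_sup_right hb)
  · apply sup_le
    · intro x hx
      rw [Submodule.restrictScalars_mem]
      exact Submodule.mem_sup_left hx
    · intro x hx
      rw [Submodule.restrictScalars_mem]
      exact Submodule.mem_sup_right hx

theorem four_finrank {d : ℕ} {J K : Ideal 𝒪} (hJ : mx (n := n) ^ d ≤ J) (hK : mx (n := n) ^ d ≤ K) :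
    Module.finrank ℂ (𝒪 ⧸ (J ⊓ K : Ideal 𝒪)) + Module.finrank ℂ (𝒪 ⧸ (J ⊔ K : Ideal 𝒪))
      = Module.finrank ℂ (𝒪 ⧸ J) + Module.finrank ℂ (𝒪 ⧸ K) := by
  have hJK : mx (n := n) ^ d ≤ J ⊓ K := le_inf hJ hK
  have hJK' : mx (n := n) ^ d ≤ J ⊔ K := le_trans hJ le_sup_left
  have h1 := finrank_quotient_add (J := J) rfl hJ
  have h2 := finrank_quotient_add (J := K) rfl hK
  have h3 := finrank_quotient_add (J := J ⊓ K) rfl hJK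
  have h4 := finrank_quotient_add (J := J ⊔ K) rfl hJK'
  rw [map_mkQ_inf hJ hK] at h3
  rw [map_mkQ_sup] at h4
  haveI hfin : Module.Finite ℂ (𝒪 ⧸ (mx (n := n) ^ d : Ideal 𝒪)) := finite_quotient le_rfl
  have h5 := Submodule.finrank_sup_add_finrank_inf_eq
    ((Submodule.map (Submodule.mkQ ((mx (n := n) ^ d : Ideal 𝒪) : Submodule 𝒪 𝒪))
      (J : Submodule 𝒪 𝒪)).restrictScalars ℂ)
    ((Submodule.map (Submodule.mkQ ((mx (n := n) ^ d : Ideal 𝒪) : Submodule 𝒪 𝒪))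
      (K : Submodule 𝒪 𝒪)).restrictScalars ℂ)
  rw [← restrictScalars_sup] at h5
  have hrinf : ((Submodule.map (Submodule.mkQ ((mx (n := n) ^ d : Ideal 𝒪) : Submodule 𝒪 𝒪))
        (J : Submodule 𝒪 𝒪)) ⊓ (Submodule.map (Submodule.mkQ _) (K : Submodule 𝒪 𝒪))).restrictScalars ℂ
      = (Submodule.map (Submodule.mkQ ((mx (n := n) ^ d : Ideal 𝒪) : Submodule 𝒪 𝒪))
        (J : Submodule 𝒪 𝒪)).restrictScalars ℂ
        ⊓ (Submodule.map (Submodule.mkQ _) (K : Submodule 𝒪 𝒪)).restrictScalars ℂ := rfl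
  rw [← hrinf] at h5
  omega

/-! ### The splayed intersection identity -/

theorem inf_eq_mul_sup {X : Fin n → Prop} {g h : 𝒪}
    (hgX : supV X g) (hhY : supV (fun i => ¬ X i) h) (hg0 : g ≠ 0) (hh0 : h ≠ 0) (d : ℕ) :
    (Ideal.span {g} ⊔ mx (n := n) ^ d) ⊓ (Ideal.span {h} ⊔ mx (n := n) ^ d)
      = Ideal.span {g * h} ⊔ mx (n := n) ^ d := by
  obtain ⟨r, hgr, hgre⟩ := exists_ord hg0
  apply le_antisymm
  · intro f hf
    obtain ⟨hf1, hf2⟩ := Submodule.mem_inf.mp hf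
    obtain ⟨u1, hu1, p, hp, rfl⟩ := Submodule.mem_sup.mp hf1
    obtain ⟨a, rfl⟩ := Ideal.mem_span_singleton.mp hu1
    obtain ⟨u2, hu2, q, hq, hequ⟩ := Submodule.mem_sup.mp hf2
    obtain ⟨b, rfl⟩ := Ideal.mem_span_singleton.mp hu2
    have hlow : lowVan d (g * a - h * b) := by
      have heq2 : g * a - h * b = q - p := by linear_combination - hequ
      rw [heq2]
      exact lowVan_sub (mem_pow_mx_iff.mp hq) (mem_pow_mx_iff.mp hp)
    obtain ⟨c, hc⟩ := key_approx hgX hhY hh0 hgr hgre d a b hlow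
    have hre : g * a + p = (g * h) * c + (g * (a - h * c) + p) := by ring
    rw [hre]
    apply Submodule.add_mem
    · exact Submodule.mem_sup_left (Ideal.mem_span_singleton.mpr ⟨c, rfl⟩)
    · apply Submodule.mem_sup_right
      apply Ideal.add_mem _ _ hp
      rw [mem_pow_mx_iff]
      exact lowVan_mono (by omega) (lowVan_mul hgr hc)
  · apply sup_le
    · apply le_inf
      · exact le_trans (Ideal.span_singleton_le_span_singleton.mpr ⟨h, rfl⟩) le_sup_left
      · exact le_trans (Ideal.span_singleton_le_span_singleton.mpr ⟨g, mul_comm g h⟩) le_sup_left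
    · exact le_inf le_sup_right le_sup_right

end HSAux


/-- Additivity of the Hilbert–Samuel polynomials for splayed divisors: if `g` depends only on
the first `k` variables and `h` only on the remaining ones (both reduced nonzero nonunits),
then for all large `d` the Hilbert–Samuel functions satisfy
`χ_{𝒪/(gh)} + χ_{𝒪/(g,h)} = χ_{𝒪/(g)} + χ_{𝒪/(h)}`. -/
theorem hilbert_samuel_additive_splayed {n : ℕ} (k : ℕ) (hk1 : 1 ≤ k) (hkn : k ≤ n - 1)
    (g h : MvPowerSeries (Fin n) ℂ)
    (hgx : DependsOnlyOn {i : Fin n | (i : ℕ) < k} g)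
    (hhy : DependsOnlyOn {i : Fin n | k ≤ (i : ℕ)} h)
    (hg : Squarefree g) (hh : Squarefree h)
    (hg0 : g ≠ 0) (hh0 : h ≠ 0) (hgu : ¬ IsUnit g) (hhu : ¬ IsUnit h) :
    ∃ D : ℕ, ∀ d ≥ D,
      moduleLength (MvPowerSeries (Fin n) ℂ)
          (MvPowerSeries (Fin n) ℂ ⧸ (Ideal.span {g * h} ⊔ (mxIdeal n) ^ d))
        + moduleLength (MvPowerSeries (Fin n) ℂ)
            (MvPowerSeries (Fin n) ℂ ⧸ (Ideal.span {g, h} ⊔ (mxIdeal n) ^ d))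
      = moduleLength (MvPowerSeries (Fin n) ℂ)
          (MvPowerSeries (Fin n) ℂ ⧸ (Ideal.span {g} ⊔ (mxIdeal n) ^ d))
        + moduleLength (MvPowerSeries (Fin n) ℂ)
            (MvPowerSeries (Fin n) ℂ ⧸ (Ideal.span {h} ⊔ (mxIdeal n) ^ d)) := by
  classical
  refine ⟨0, fun d _ => ?_⟩
  have hgs : HSAux.supV (fun i : Fin n => (i : ℕ) < k) g := by
    intro e he
    apply hgx
    rw [HSAux.onV] at he
    push_neg at he
    obtain ⟨i, hi1, hi2⟩ := he
    exact ⟨i, by simpa using hi1, hi2⟩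
  have hhs : HSAux.supV (fun i : Fin n => ¬ (i : ℕ) < k) h := by
    intro e he
    apply hhy
    rw [HSAux.onV] at he
    push_neg at he
    obtain ⟨i, hi1, hi2⟩ := he
    exact ⟨i, by simp; omega, hi2⟩
  have hmx : mxIdeal n = HSAux.mx := rfl
  have hidinf : Ideal.span {g * h} ⊔ (mxIdeal n) ^ d
      = (Ideal.span {g} ⊔ (mxIdeal n) ^ d) ⊓ (Ideal.span {h} ⊔ (mxIdeal n) ^ d) := by
    rw [hmx]
    exact (HSAux.inf_eq_mul_sup hgs hhs hg0 hh0 d).symm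
  have hidsup : Ideal.span {g, h} ⊔ (mxIdeal n) ^ d
      = (Ideal.span {g} ⊔ (mxIdeal n) ^ d) ⊔ (Ideal.span {h} ⊔ (mxIdeal n) ^ d) := by
    rw [Ideal.span_insert, sup_sup_sup_comm, sup_idem]
  have hJ : HSAux.mx (n := n) ^ d ≤ Ideal.span {g} ⊔ (mxIdeal n) ^ d := by
    rw [hmx]; exact le_sup_right
  have hK : HSAux.mx (n := n) ^ d ≤ Ideal.span {h} ⊔ (mxIdeal n) ^ d := by
    rw [hmx]; exact le_sup_right
  rw [hidinf, hidsup]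
  simp only [moduleLength]
  rw [HSAux.krullDim_quotient (le_inf hJ hK),
    HSAux.krullDim_quotient (le_trans hJ le_sup_left),
    HSAux.krullDim_quotient hJ, HSAux.krullDim_quotient hK]
  exact_mod_cast HSAux.four_finrank hJ hK
end
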